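/- arXiv:2412.08183 — 6 statements merged into one kernel-verified Lean document; each statement's English description precedes it below -/
import Mathlib

section
/- Let d ≥ 1, m > 0, and let g be a Schwartz function on ℝ^d (an element of SchwartzMap (EuclideanSpace ℝ (Fin d)) ℂ). Then the function x ↦ g(x) / (‖x‖² + m²) is again a Schwartz function on ℝ^d. -/
open Real MeasureTheory SchwartzMap

/-- Bound on the iterated derivatives of `Inv.inv` on `Set.Ioi 0`, at points `y ≥ m²`. -/
private lemma aux_inv_bound (m : ℝ) (hm : 0 < m) (n : ℕ) :
    ∀ i ≤ n, ∀ y : ℝ, m ^ 2 ≤ y →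
      ‖iteratedFDerivWithin ℝ i Inv.inv (Set.Ioi (0:ℝ)) y‖ ≤
        (n.factorial : ℝ) * (max (m ^ 2)⁻¹ 1) ^ (n + 1) := by
  intro i hi y hy
  have hm2 : (0:ℝ) < m ^ 2 := by positivity
  have hy0 : (0:ℝ) < y := lt_of_lt_of_le hm2 hy
  rw [iteratedFDerivWithin_of_isOpen i isOpen_Ioi hy0,
    norm_iteratedFDeriv_eq_norm_iteratedDeriv, iteratedDeriv_eq_iterate, iter_deriv_inv]
  set M := max (m ^ 2)⁻¹ 1 with hM
  have hM1 : (1:ℝ) ≤ M := le_max_right _ _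
  have h1 : ‖∏ j ∈ Finset.range i, (-1 - (j:ℝ))‖ = (i.factorial : ℝ) := by
    rw [Real.norm_eq_abs, Finset.abs_prod]
    have habs : ∀ j ∈ Finset.range i, |(-1 - (j:ℝ))| = ((j:ℝ) + 1) := by
      intro j _
      rw [abs_of_nonpos (by have := Nat.cast_nonneg (α := ℝ) j; linarith)]
      ring
    rw [Finset.prod_congr rfl habs]
    exact_mod_cast Finset.prod_range_add_one_eq_factorial i
  have h2 : y ^ (-1 - (i:ℤ)) = (y ^ (i+1))⁻¹ := by
    rw [show (-1 - (i:ℤ)) = -(((i+1 : ℕ)):ℤ) by push_cast; ring, zpow_neg, zpow_natCast]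
  have h1' : ‖(-1:ℝ) ^ i * (i.factorial : ℝ)‖ = (i.factorial : ℝ) := by simp
  rw [norm_mul, h1', Real.norm_eq_abs, h2, abs_of_pos (by positivity)]
  have hmono : (y ^ (i+1))⁻¹ ≤ M ^ (n+1) := by
    have e1 : (m ^ 2) ^ (i+1) ≤ y ^ (i+1) := pow_le_pow_left₀ hm2.le hy _
    have e2 : (y ^ (i+1))⁻¹ ≤ ((m ^ 2) ^ (i+1))⁻¹ := by
      apply inv_anti₀ (by positivity) e1
    refine e2.trans ?_
    rw [← inv_pow]
    calc ((m ^ 2)⁻¹) ^ (i+1) ≤ M ^ (i+1) :=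
          pow_le_pow_left₀ (by positivity) (le_max_left _ _) _
      _ ≤ M ^ (n+1) := pow_le_pow_right₀ hM1 (by omega)
  have hfac : (i.factorial : ℝ) ≤ (n.factorial : ℝ) := by
    exact_mod_cast Nat.factorial_le hi
  exact mul_le_mul hfac hmono (by positivity) (by positivity)

set_option maxHeartbeats 1000000 in
/-- Bound on the iterated derivatives of `x ↦ ‖x‖² + m²` on `ℝ^d`. -/
private lemma aux_q_bound (d : ℕ) (m : ℝ) (x : EuclideanSpace ℝ (Fin d)) :
    ∀ i : ℕ, 1 ≤ i →
      ‖iteratedFDeriv ℝ i (fun x : EuclideanSpace ℝ (Fin d) => ‖x‖ ^ 2 + m ^ 2) x‖ ≤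
        (2 * (1 + ‖x‖)) ^ i := by
  set L : EuclideanSpace ℝ (Fin d) →L[ℝ] EuclideanSpace ℝ (Fin d) →L[ℝ] ℝ :=
    2 • (innerSL ℝ) with hL
  have hD0 : (0:ℝ) ≤ 2 * (1 + ‖x‖) := by positivity
  have hD1 : (1:ℝ) ≤ 2 * (1 + ‖x‖) := by nlinarith [norm_nonneg x]
  have hD2 : (2:ℝ) ≤ 2 * (1 + ‖x‖) := by nlinarith [norm_nonneg x]
  have hLnorm : ‖L‖ ≤ 2 := by
    refine ContinuousLinearMap.opNorm_le_bound _ (by norm_num) fun y => ?_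
    rw [hL, ContinuousLinearMap.smul_apply, two_smul]
    calc ‖innerSL ℝ y + innerSL ℝ y‖ ≤ ‖innerSL ℝ y‖ + ‖innerSL ℝ y‖ := norm_add_le _ _
      _ = 2 * ‖y‖ := by rw [innerSL_apply_norm]; ring
  have hfd : (fderiv ℝ (fun x : EuclideanSpace ℝ (Fin d) => ‖x‖ ^ 2 + m ^ 2)) = ⇑L := by
    funext y
    rw [((hasStrictFDerivAt_norm_sq y).hasFDerivAt.add_const (m ^ 2)).fderiv]
    simp [hL]
  intro i hi
  obtain ⟨j, rfl⟩ : ∃ j, i = j + 1 := ⟨i - 1, (Nat.succ_pred_eq_of_pos hi).symm⟩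
  rw [← norm_iteratedFDeriv_fderiv, hfd]
  rcases j with _ | j
  · rw [norm_iteratedFDeriv_zero]
    calc ‖L x‖ ≤ ‖L‖ * ‖x‖ := L.le_opNorm x
      _ ≤ 2 * (1 + ‖x‖) := by nlinarith [norm_nonneg x, ContinuousLinearMap.opNorm_nonneg L]
      _ = (2 * (1 + ‖x‖)) ^ (0 + 1) := (pow_one _).symm
  rcases j with _ | k
  · rw [← norm_iteratedFDeriv_fderiv, norm_iteratedFDeriv_zero, ContinuousLinearMap.fderiv]
    calc ‖L‖ ≤ 2 := hLnorm
      _ ≤ (2 * (1 + ‖x‖)) ^ (1 + 1) := by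
          rw [pow_two]; nlinarith
  · rw [← norm_iteratedFDeriv_fderiv]
    have hconst : fderiv ℝ (⇑L) = fun _ : EuclideanSpace ℝ (Fin d) => L :=
      funext fun y => ContinuousLinearMap.fderiv L
    rw [hconst, iteratedFDeriv_const_of_ne (Nat.succ_ne_zero k) L]
    simp only [Pi.zero_apply, norm_zero]
    positivity

set_option maxHeartbeats 1000000 in
/-- For `m > 0`, dividing a Schwartz function on `ℝ^d` by `‖x‖² + m²` yields a Schwartz
function. -/
theorem schwartz_div_norm_sq_add_mass_sq (d : ℕ) (hd : 1 ≤ d) (m : ℝ) (hm : 0 < m)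
    (g : SchwartzMap (EuclideanSpace ℝ (Fin d)) ℂ) :
    ∃ h : SchwartzMap (EuclideanSpace ℝ (Fin d)) ℂ,
      ∀ x, h x = g x / ((‖x‖ ^ 2 + m ^ 2 : ℝ) : ℂ) := by
  have hq_smooth : ContDiff ℝ (⊤:ℕ∞) (fun x : EuclideanSpace ℝ (Fin d) => ‖x‖ ^ 2 + m ^ 2) :=
    (contDiff_norm_sq ℝ).add contDiff_const
  have hq_pos : ∀ x : EuclideanSpace ℝ (Fin d), 0 < ‖x‖ ^ 2 + m ^ 2 := fun x => by positivity
  have hq_lb : ∀ x : EuclideanSpace ℝ (Fin d), m ^ 2 ≤ ‖x‖ ^ 2 + m ^ 2 := fun x => by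
    nlinarith [sq_nonneg ‖x‖]
  have hw_smooth : ContDiff ℝ (⊤:ℕ∞)
      (fun x : EuclideanSpace ℝ (Fin d) => (‖x‖ ^ 2 + m ^ 2)⁻¹) :=
    hq_smooth.inv fun x => (hq_pos x).ne'
  have hw : Function.HasTemperateGrowth
      (fun x : EuclideanSpace ℝ (Fin d) => (‖x‖ ^ 2 + m ^ 2)⁻¹) := by
    refine ⟨hw_smooth, fun n => ⟨n,
      (n.factorial : ℝ) * ((n.factorial : ℝ) * (max (m ^ 2)⁻¹ 1) ^ (n + 1)) * 2 ^ n,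
      fun x => ?_⟩⟩
    have hcomp := norm_iteratedFDerivWithin_comp_le (𝕜 := ℝ)
      (g := Inv.inv) (f := fun x : EuclideanSpace ℝ (Fin d) => ‖x‖ ^ 2 + m ^ 2)
      (s := Set.univ) (t := Set.Ioi (0:ℝ)) (n := n) (N := (⊤:ℕ∞))
      ((contDiffOn_inv ℝ).mono fun y hy => ne_of_gt hy)
      hq_smooth.contDiffOn (mod_cast le_top) isOpen_Ioi.uniqueDiffOn uniqueDiffOn_univ
      (fun y _ => hq_pos y) (Set.mem_univ x)
      (C := (n.factorial : ℝ) * (max (m ^ 2)⁻¹ 1) ^ (n + 1)) (D := 2 * (1 + ‖x‖))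
      (fun i hi => aux_inv_bound m hm n i hi _ (hq_lb x))
      (fun i h1 _ => by
        rw [iteratedFDerivWithin_univ]
        exact aux_q_bound d m x i h1)
    rw [iteratedFDerivWithin_univ] at hcomp
    have heq : (fun x : EuclideanSpace ℝ (Fin d) => (‖x‖ ^ 2 + m ^ 2)⁻¹)
        = Inv.inv ∘ (fun x : EuclideanSpace ℝ (Fin d) => ‖x‖ ^ 2 + m ^ 2) := rfl
    rw [heq]
    refine hcomp.trans (le_of_eq ?_)
    rw [mul_pow]
    ring
  have hwc : Function.HasTemperateGrowth
      (fun x : EuclideanSpace ℝ (Fin d) => (((‖x‖ ^ 2 + m ^ 2)⁻¹ : ℝ) : ℂ)) := by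
    refine ⟨Complex.ofRealCLM.contDiff.comp hw_smooth, fun n => ?_⟩
    obtain ⟨k, C, hC⟩ := hw.2 n
    refine ⟨k, C, fun x => ?_⟩
    have heq : (fun x : EuclideanSpace ℝ (Fin d) => (((‖x‖ ^ 2 + m ^ 2)⁻¹ : ℝ) : ℂ))
        = (Complex.ofRealLI : ℝ →ₗᵢ[ℝ] ℂ) ∘
          (fun x : EuclideanSpace ℝ (Fin d) => (‖x‖ ^ 2 + m ^ 2)⁻¹) := rfl
    rw [heq, Complex.ofRealLI.norm_iteratedFDeriv_comp_left (hw_smooth.contDiffAt (x := x)) (mod_cast le_top)]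
    exact hC x
  refine ⟨bilinLeftCLM (ContinuousLinearMap.mul ℝ ℂ) hwc g, fun x => ?_⟩
  have : bilinLeftCLM (ContinuousLinearMap.mul ℝ ℂ) hwc g x
      = g x * (((‖x‖ ^ 2 + m ^ 2)⁻¹ : ℝ) : ℂ) := rfl
  rw [this, Complex.ofReal_inv, div_eq_mul_inv]
end

section
/- Let d ≥ 1 and m > 0. The linear map from the Schwartz space S(ℝ^d) (complex-valued Schwartz functions on ℝ^d) to itself sending f to the function x ↦ -Δf(x) + m²·f(x), where Δf(x) = ∑_{i=1}^d ∂²f/∂x_i²(x) is the Laplacian, is a bijection. -/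
open Real MeasureTheory

/-- The Laplacian of `g : ℝ^d → ℂ`: the sum of the second directional derivatives of `g`
along the standard basis vectors. -/
noncomputable def laplacian {d : ℕ} (g : EuclideanSpace ℝ (Fin d) → ℂ)
    (x : EuclideanSpace ℝ (Fin d)) : ℂ :=
  ∑ i : Fin d,
    fderiv ℝ (fun y => fderiv ℝ g y (EuclideanSpace.single i 1)) x (EuclideanSpace.single i 1)

open LineDeriv in
noncomputable def SchwartzMap.pderivCLM (𝕜 : Type*) [RCLike 𝕜] {E F : Type*}
    [NormedAddCommGroup E] [NormedSpace ℝ E] [NormedAddCommGroup F] [NormedSpace ℝ F]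
    [NormedSpace 𝕜 F] [SMulCommClass ℝ 𝕜 F] (m : E) :
    SchwartzMap E F →L[𝕜] SchwartzMap E F :=
  lineDerivOpCLM 𝕜 (SchwartzMap E F) m

theorem SchwartzMap.pderivCLM_apply (𝕜 : Type*) [RCLike 𝕜] {E F : Type*}
    [NormedAddCommGroup E] [NormedSpace ℝ E] [NormedAddCommGroup F] [NormedSpace ℝ F]
    [NormedSpace 𝕜 F] [SMulCommClass ℝ 𝕜 F] (m : E) (f : SchwartzMap E F) (x : E) :
    SchwartzMap.pderivCLM 𝕜 m f x = fderiv ℝ f x m := rfl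

section tempaux
open Function
variable {E F : Type*} [NormedAddCommGroup E] [NormedSpace ℝ E]
    [NormedAddCommGroup F] [NormedSpace ℝ F]

private lemma aux_unif_smul {f : E → ℝ} {g : E → F} (hf : ContDiff ℝ ((⊤:ℕ∞)) f)
    (hg : ContDiff ℝ ((⊤:ℕ∞)) g)
    {n k k' : ℕ} {C C' : ℝ} (hC : 0 ≤ C) (hC' : 0 ≤ C')
    (hfb : ∀ i ≤ n, ∀ x, ‖iteratedFDeriv ℝ i f x‖ ≤ C * (1 + ‖x‖) ^ k)
    (hgb : ∀ i ≤ n, ∀ x, ‖iteratedFDeriv ℝ i g x‖ ≤ C' * (1 + ‖x‖) ^ k') :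
    ∀ i ≤ n, ∀ x, ‖iteratedFDeriv ℝ i (fun y ↦ f y • g y) x‖ ≤
      2 ^ n * C * C' * (1 + ‖x‖) ^ (k + k') := by
  intro i hi x
  calc ‖iteratedFDeriv ℝ i (fun y ↦ f y • g y) x‖
      ≤ ∑ j ∈ Finset.range (i + 1), (i.choose j : ℝ) * ‖iteratedFDeriv ℝ j f x‖ *
        ‖iteratedFDeriv ℝ (i - j) g x‖ :=
        norm_iteratedFDeriv_smul_le hf hg x (by exact_mod_cast le_top)
    _ ≤ ∑ j ∈ Finset.range (i + 1), (i.choose j : ℝ) *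
          ((C * (1+‖x‖)^k) * (C' * (1+‖x‖)^k')) := by
        apply Finset.sum_le_sum; intro j hj
        have hj' : j ≤ n := le_trans (Nat.lt_succ_iff.mp (Finset.mem_range.mp hj)) hi
        rw [mul_assoc]
        gcongr
        · exact hfb j hj' x
        · exact hgb (i - j) (le_trans (Nat.sub_le i j) hi) x
    _ = 2 ^ i * ((C * (1+‖x‖)^k) * (C' * (1+‖x‖)^k')) := by
        rw [← Finset.sum_mul, ← Nat.cast_sum, Nat.sum_range_choose]
        push_cast; ring
    _ ≤ 2 ^ n * ((C * (1+‖x‖)^k) * (C' * (1+‖x‖)^k')) := by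
        have h2 : (2:ℝ)^i ≤ 2^n := by
          apply pow_le_pow_right₀ one_le_two hi
        have hnn : (0:ℝ) ≤ (C * (1+‖x‖)^k) * (C' * (1+‖x‖)^k') := by positivity
        exact mul_le_mul_of_nonneg_right h2 hnn
    _ = 2 ^ n * C * C' * (1+‖x‖)^(k+k') := by rw [pow_add]; ring

private lemma HasTemperateGrowth.mul' {f g : E → ℝ} (hf : f.HasTemperateGrowth)
    (hg : g.HasTemperateGrowth) : Function.HasTemperateGrowth (fun x ↦ f x * g x) := by
  refine ⟨hf.1.mul hg.1, fun n ↦ ?_⟩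
  obtain ⟨k, C, hC, hfb⟩ := hf.norm_iteratedFDeriv_le_uniform n
  obtain ⟨k', C', hC', hgb⟩ := hg.norm_iteratedFDeriv_le_uniform n
  exact ⟨k + k', 2^n * C * C', fun x ↦ by
    simpa [smul_eq_mul] using aux_unif_smul hf.1 hg.1 hC hC' hfb hgb n le_rfl x⟩

private lemma HasTemperateGrowth.add' {f g : E → F} (hf : f.HasTemperateGrowth)
    (hg : g.HasTemperateGrowth) : Function.HasTemperateGrowth (fun x ↦ f x + g x) := by
  refine ⟨hf.1.add hg.1, fun n ↦ ?_⟩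
  obtain ⟨k, C, hC, hfb⟩ := hf.norm_iteratedFDeriv_le_uniform n
  obtain ⟨k', C', hC', hgb⟩ := hg.norm_iteratedFDeriv_le_uniform n
  refine ⟨k + k', C + C', fun x ↦ ?_⟩
  have h0 : (1:ℝ) ≤ 1 + ‖x‖ := by linarith [norm_nonneg x]
  have heq : iteratedFDeriv ℝ n (fun x ↦ f x + g x) x
      = iteratedFDeriv ℝ n f x + iteratedFDeriv ℝ n g x :=
    iteratedFDeriv_add_apply (hf.1.contDiffAt.of_le (by exact_mod_cast le_top))
      (hg.1.contDiffAt.of_le (by exact_mod_cast le_top))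
  rw [heq]
  calc ‖iteratedFDeriv ℝ n f x + iteratedFDeriv ℝ n g x‖
      ≤ ‖iteratedFDeriv ℝ n f x‖ + ‖iteratedFDeriv ℝ n g x‖ := norm_add_le _ _
    _ ≤ C * (1+‖x‖)^k + C' * (1+‖x‖)^k' := add_le_add (hfb n le_rfl x) (hgb n le_rfl x)
    _ ≤ C * (1+‖x‖)^(k+k') + C' * (1+‖x‖)^(k+k') := by
        have h1 : (1+‖x‖)^k ≤ (1+‖x‖)^(k+k') := pow_le_pow_right₀ h0 (by omega)
        have h2 : (1+‖x‖)^k' ≤ (1+‖x‖)^(k+k') := pow_le_pow_right₀ h0 (by omega)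
        exact add_le_add (mul_le_mul_of_nonneg_left h1 hC) (mul_le_mul_of_nonneg_left h2 hC')
    _ = (C + C') * (1+‖x‖)^(k+k') := by ring

private lemma HasTemperateGrowth.finsum {ι : Type*} (s : Finset ι) (f : ι → E → F)
    (h : ∀ i ∈ s, (f i).HasTemperateGrowth) :
    Function.HasTemperateGrowth (fun x ↦ ∑ i ∈ s, f i x) := by
  classical
  induction s using Finset.induction_on with
  | empty => simpa using Function.HasTemperateGrowth.const (0 : F)
  | @insert a s hni ih =>
    simp only [Finset.sum_insert hni]
    exact HasTemperateGrowth.add' (h a (Finset.mem_insert_self a s))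
      (ih fun i hi ↦ h i (Finset.mem_insert_of_mem hi))

private lemma HasTemperateGrowth.inv_of_le {φ : E → ℝ} (hφ : φ.HasTemperateGrowth) {δ : ℝ}
    (hδ : 0 < δ) (hlb : ∀ x, δ ≤ φ x) :
    Function.HasTemperateGrowth (fun x ↦ (φ x)⁻¹) := by
  have hne : ∀ x, φ x ≠ 0 := fun x ↦ (lt_of_lt_of_le hδ (hlb x)).ne'
  have hψ : ContDiff ℝ ((⊤:ℕ∞)) (fun x ↦ (φ x)⁻¹) := hφ.1.inv hne
  refine ⟨hψ, fun n ↦ ?_⟩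
  suffices key : ∀ n : ℕ, ∃ (k : ℕ) (C : ℝ), 0 ≤ C ∧ ∀ i ≤ n, ∀ x,
      ‖iteratedFDeriv ℝ i (fun x ↦ (φ x)⁻¹) x‖ ≤ C * (1 + ‖x‖) ^ k by
    obtain ⟨k, C, _, h⟩ := key n
    exact ⟨k, C, h n le_rfl⟩
  intro n
  induction n with
  | zero =>
    refine ⟨0, δ⁻¹, by positivity, ?_⟩
    intro i hi x
    interval_cases i
    rw [norm_iteratedFDeriv_zero]
    simp only [Real.norm_eq_abs, pow_zero, mul_one]
    rw [abs_of_pos (by exact inv_pos.2 (lt_of_lt_of_le hδ (hlb x)))]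
    exact inv_anti₀ hδ (hlb x)
  | succ n ih =>
    obtain ⟨k, C, hC, hIH⟩ := ih
    obtain ⟨k', C', hC', hφb⟩ := hφ.norm_iteratedFDeriv_le_uniform (n+1)
    have hdφ : Differentiable ℝ φ := hφ.1.differentiable (by simp)
    have hfd : fderiv ℝ (fun x ↦ (φ x)⁻¹)
        = fun x ↦ (-((φ x)⁻¹ * (φ x)⁻¹)) • fderiv ℝ φ x := by
      funext x
      have h1 : HasFDerivAt (fun y : ℝ ↦ y⁻¹)
          (ContinuousLinearMap.smulRight (1 : ℝ →L[ℝ] ℝ) (-((φ x) ^ 2)⁻¹)) (φ x) :=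
        (hasDerivAt_inv (hne x)).hasFDerivAt
      have h2 : HasFDerivAt (fun x ↦ (φ x)⁻¹)
          ((ContinuousLinearMap.smulRight (1 : ℝ →L[ℝ] ℝ) (-((φ x) ^ 2)⁻¹)).comp
            (fderiv ℝ φ x)) x := h1.comp x (hdφ x).hasFDerivAt
      rw [h2.fderiv]
      ext v
      simp only [ContinuousLinearMap.coe_comp', Function.comp_apply,
        ContinuousLinearMap.smulRight_apply, ContinuousLinearMap.one_apply,
        ContinuousLinearMap.coe_smul', Pi.smul_apply, smul_eq_mul, pow_two, mul_inv]
      ring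
    have hs_cd : ContDiff ℝ ((⊤:ℕ∞)) (fun x ↦ -((φ x)⁻¹ * (φ x)⁻¹)) := (hψ.mul hψ).neg
    have hsb : ∀ i ≤ n, ∀ x, ‖iteratedFDeriv ℝ i (fun x ↦ -((φ x)⁻¹ * (φ x)⁻¹)) x‖
        ≤ 2^n * C * C * (1+‖x‖)^(k+k) := by
      intro i hi x
      have heq : iteratedFDeriv ℝ i (fun x ↦ -((φ x)⁻¹ * (φ x)⁻¹)) x
          = -iteratedFDeriv ℝ i (fun x ↦ (φ x)⁻¹ * (φ x)⁻¹) x := iteratedFDeriv_neg_apply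
      rw [heq, norm_neg]
      have := aux_unif_smul hψ hψ hC hC hIH hIH i hi x
      simpa [smul_eq_mul] using this
    have hgb : ∀ i ≤ n, ∀ x, ‖iteratedFDeriv ℝ i (fderiv ℝ φ) x‖ ≤ C' * (1+‖x‖)^k' := by
      intro i hi x
      rw [norm_iteratedFDeriv_fderiv]
      exact hφb (i+1) (by omega) x
    have hfderiv_cd : ContDiff ℝ ((⊤:ℕ∞)) (fderiv ℝ φ) :=
      hφ.1.fderiv_right (by exact_mod_cast le_top)
    have hmain := aux_unif_smul hs_cd hfderiv_cd (by positivity) hC' hsb hgb n le_rfl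
    refine ⟨(k+k) + k', max C (2^n * (2^n * C * C) * C'), le_max_of_le_left hC, ?_⟩
    intro i hi x
    have h0 : (1:ℝ) ≤ 1 + ‖x‖ := by linarith [norm_nonneg x]
    rcases Nat.lt_succ_iff_lt_or_eq.mp (Nat.lt_succ_of_le hi) with h | h
    · have hin : i ≤ n := Nat.lt_succ_iff.mp h
      calc ‖iteratedFDeriv ℝ i (fun x ↦ (φ x)⁻¹) x‖ ≤ C * (1+‖x‖)^k := hIH i hin x
        _ ≤ max C (2^n * (2^n * C * C) * C') * (1+‖x‖)^((k+k)+k') := by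
            apply mul_le_mul (le_max_left _ _) (pow_le_pow_right₀ h0 (by omega))
              (by positivity) (le_trans hC (le_max_left _ _))
    · subst h
      have heq : ‖iteratedFDeriv ℝ (n+1) (fun x ↦ (φ x)⁻¹) x‖
          = ‖iteratedFDeriv ℝ n (fderiv ℝ (fun x ↦ (φ x)⁻¹)) x‖ :=
        (norm_iteratedFDeriv_fderiv (f := fun x ↦ (φ x)⁻¹)).symm
      rw [heq, hfd]
      calc ‖iteratedFDeriv ℝ n (fun x ↦ (-((φ x)⁻¹ * (φ x)⁻¹)) • fderiv ℝ φ x) x‖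
          ≤ 2^n * (2^n * C * C) * C' * (1+‖x‖)^((k+k)+k') := hmain x
        _ ≤ max C (2^n * (2^n * C * C) * C') * (1+‖x‖)^((k+k)+k') := by
            apply mul_le_mul_of_nonneg_right (le_max_right _ _) (by positivity)
end tempaux

section fourieraux
open SchwartzMap
open scoped FourierTransform
variable {V : Type*} [NormedAddCommGroup V] [InnerProductSpace ℝ V] [FiniteDimensional ℝ V]
  [MeasurableSpace V] [BorelSpace V]

private lemma fourier_pderiv (f : 𝓢(V, ℂ)) (v : V) (ξ : V) :
    𝓕 (⇑(SchwartzMap.pderivCLM ℂ v f)) ξ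
      = (2 * π * Complex.I * (inner ℝ ξ v : ℝ)) * 𝓕 (⇑f) ξ := by
  have hcoe : ⇑(SchwartzMap.fderivCLM ℂ V ℂ f) = fderiv ℝ ⇑f :=
    funext fun x ↦ SchwartzMap.fderivCLM_apply ℂ f x
  have hint : Integrable (fderiv ℝ ⇑f) := hcoe ▸ (SchwartzMap.fderivCLM ℂ V ℂ f).integrable
  have h1 : 𝓕 (fderiv ℝ ⇑f) = VectorFourier.fourierSMulRight (-innerSL ℝ) (𝓕 ⇑f) :=
    Real.fourier_fderiv f.integrable f.differentiable hint
  have h2 : ⇑(SchwartzMap.pderivCLM ℂ v f) = fun x ↦ fderiv ℝ ⇑f x v :=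
    funext fun x ↦ SchwartzMap.pderivCLM_apply ℂ v f x
  rw [h2, ← Real.fourier_continuousLinearMap_apply hint, h1]
  simp only [VectorFourier.fourierSMulRight_apply, ContinuousLinearMap.neg_apply,
    innerSL_apply_apply]
  simp [Complex.real_smul, smul_eq_mul]
  rw [show (innerSL ℝ ξ) v = inner ℝ ξ v from rfl]
  ring
end fourieraux

section opaux
open SchwartzMap
open scoped FourierTransform
variable {d : ℕ} (m : ℝ)

/-- `f ↦ m² f - Δ f` as an operation on Schwartz space. -/
private noncomputable def massiveOp (f : 𝓢(EuclideanSpace ℝ (Fin d), ℂ)) :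
    𝓢(EuclideanSpace ℝ (Fin d), ℂ) :=
  (m : ℂ)^2 • f - ∑ i : Fin d,
    SchwartzMap.pderivCLM ℂ (EuclideanSpace.single i (1:ℝ))
      (SchwartzMap.pderivCLM ℂ (EuclideanSpace.single i (1:ℝ)) f)

private lemma schwartz_sum_apply {ι : Type*} (s : Finset ι)
    (F : ι → 𝓢(EuclideanSpace ℝ (Fin d), ℂ)) (x : EuclideanSpace ℝ (Fin d)) :
    (∑ i ∈ s, F i) x = ∑ i ∈ s, F i x := by
  simp [SchwartzMap.sum_apply]

private lemma massiveOp_apply (f : 𝓢(EuclideanSpace ℝ (Fin d), ℂ))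
    (x : EuclideanSpace ℝ (Fin d)) :
    massiveOp m f x = -laplacian (⇑f) x + (m : ℂ)^2 * f x := by
  have hcoe : ∀ i : Fin d, ⇑(SchwartzMap.pderivCLM ℂ (EuclideanSpace.single i (1:ℝ)) f)
      = fun y ↦ fderiv ℝ ⇑f y (EuclideanSpace.single i (1:ℝ)) :=
    fun i ↦ funext fun y ↦ SchwartzMap.pderivCLM_apply ℂ _ f y
  have hterm : ∀ i : Fin d,
      (SchwartzMap.pderivCLM ℂ (EuclideanSpace.single i (1:ℝ))
        (SchwartzMap.pderivCLM ℂ (EuclideanSpace.single i (1:ℝ)) f)) x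
      = fderiv ℝ (fun y ↦ fderiv ℝ ⇑f y (EuclideanSpace.single i (1:ℝ))) x
          (EuclideanSpace.single i (1:ℝ)) := by
    intro i
    rw [SchwartzMap.pderivCLM_apply, hcoe i]
  unfold massiveOp
  rw [SchwartzMap.sub_apply, SchwartzMap.smul_apply, smul_eq_mul, schwartz_sum_apply]
  rw [Finset.sum_congr rfl fun i _ ↦ hterm i]
  unfold laplacian
  ring

private lemma fourier_massiveOp (f : 𝓢(EuclideanSpace ℝ (Fin d), ℂ))
    (ξ : EuclideanSpace ℝ (Fin d)) :
    𝓕 (⇑(massiveOp m f)) ξ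
      = ((m^2 + 4*π^2 * ∑ i : Fin d, (ξ i)^2 : ℝ) : ℂ) * 𝓕 (⇑f) ξ := by
  have hterm : ∀ i : Fin d,
      𝓕 (⇑(SchwartzMap.pderivCLM ℂ (EuclideanSpace.single i (1:ℝ))
        (SchwartzMap.pderivCLM ℂ (EuclideanSpace.single i (1:ℝ)) f))) ξ
      = ((-(4*π^2*(ξ i)^2) : ℝ) : ℂ) * 𝓕 (⇑f) ξ := by
    intro i
    rw [fourier_pderiv, fourier_pderiv]
    have hinner : (inner ℝ ξ (EuclideanSpace.single i (1:ℝ)) : ℝ) = ξ i := by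
      simp [EuclideanSpace.inner_single_right]
    rw [hinner]
    have hq : (2*(π:ℂ)*Complex.I*(ξ i : ℝ)) * ((2*π*Complex.I*(ξ i : ℝ)) * 𝓕 (⇑f) ξ)
        = (((ξ i : ℝ):ℂ)^2 * (2*π)^2 * Complex.I^2) * 𝓕 (⇑f) ξ := by ring
    rw [hq, Complex.I_sq]
    push_cast
    ring
  have hΦ : fourierTransformCLM ℂ (massiveOp m f) = (m:ℂ)^2 • fourierTransformCLM ℂ f
      - ∑ i : Fin d, fourierTransformCLM ℂ
          (SchwartzMap.pderivCLM ℂ (EuclideanSpace.single i (1:ℝ))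
            (SchwartzMap.pderivCLM ℂ (EuclideanSpace.single i (1:ℝ)) f)) := by
    unfold massiveOp
    simp only [map_sub, _root_.map_smul, map_sum]
  calc 𝓕 (⇑(massiveOp m f)) ξ = (fourierTransformCLM ℂ (massiveOp m f)) ξ := rfl
    _ = ((m:ℂ)^2 • fourierTransformCLM ℂ f - ∑ i : Fin d, fourierTransformCLM ℂ
          (SchwartzMap.pderivCLM ℂ (EuclideanSpace.single i (1:ℝ))
            (SchwartzMap.pderivCLM ℂ (EuclideanSpace.single i (1:ℝ)) f))) ξ := by rw [hΦ]
    _ = (m:ℂ)^2 * 𝓕 (⇑f) ξ - ∑ i : Fin d,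
          𝓕 (⇑(SchwartzMap.pderivCLM ℂ (EuclideanSpace.single i (1:ℝ))
            (SchwartzMap.pderivCLM ℂ (EuclideanSpace.single i (1:ℝ)) f))) ξ := by
        rw [SchwartzMap.sub_apply, SchwartzMap.smul_apply, schwartz_sum_apply, smul_eq_mul]
        rfl
    _ = ((m^2 + 4*π^2 * ∑ i : Fin d, (ξ i)^2 : ℝ) : ℂ) * 𝓕 (⇑f) ξ := by
        have hre : (∑ i : Fin d, (-(4*π^2*(ξ i)^2)) : ℝ)
            = -(4*π^2*∑ i : Fin d, (ξ i)^2) := by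
          rw [Finset.sum_neg_distrib, Finset.mul_sum]
        rw [Finset.sum_congr rfl fun i _ ↦ hterm i, ← Finset.sum_mul,
          ← Complex.ofReal_sum, hre]
        push_cast
        ring
end opaux

open SchwartzMap in
open scoped FourierTransform in
/-- For `m > 0`, the map `f ↦ -Δf + m²f` is a bijection of the Schwartz space `S(ℝ^d)` onto
itself: it is injective and surjective. -/
theorem massive_bv_bijective_on_schwartz (d : ℕ) (hd : 1 ≤ d) (m : ℝ) (hm : 0 < m) :
    (∀ f₁ f₂ : SchwartzMap (EuclideanSpace ℝ (Fin d)) ℂ,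
        (∀ x, -laplacian (⇑f₁) x + (m : ℂ) ^ 2 * f₁ x
            = -laplacian (⇑f₂) x + (m : ℂ) ^ 2 * f₂ x) → f₁ = f₂) ∧
    (∀ g : SchwartzMap (EuclideanSpace ℝ (Fin d)) ℂ,
        ∃ f : SchwartzMap (EuclideanSpace ℝ (Fin d)) ℂ,
          ∀ x, -laplacian (⇑f) x + (m : ℂ) ^ 2 * f x = g x) := by
  have hφpos : ∀ ξ : EuclideanSpace ℝ (Fin d),
      0 < m^2 + 4*π^2 * ∑ i : Fin d, (ξ i)^2 :=
    fun ξ ↦ add_pos_of_pos_of_nonneg (pow_pos hm 2) (by positivity)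
  constructor
  · intro f₁ f₂ hpt
    have hT : massiveOp m f₁ = massiveOp m f₂ := SchwartzMap.ext fun x ↦ by
      rw [massiveOp_apply, massiveOp_apply]; exact hpt x
    have hcancel : ∀ ξ, 𝓕 (⇑f₁) ξ = 𝓕 (⇑f₂) ξ := by
      intro ξ
      have h1 := fourier_massiveOp m f₁ ξ
      have h2 := fourier_massiveOp m f₂ ξ
      rw [hT] at h1
      have hne : ((m^2 + 4*π^2 * ∑ i : Fin d, (ξ i)^2 : ℝ) : ℂ) ≠ 0 := by
        exact_mod_cast (hφpos ξ).ne'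
      exact mul_left_cancel₀ hne (h1.symm.trans h2)
    have hfe : fourierTransformCLE ℂ 𝓢(EuclideanSpace ℝ (Fin d), ℂ) f₁ = fourierTransformCLE ℂ 𝓢(EuclideanSpace ℝ (Fin d), ℂ) f₂ :=
      SchwartzMap.ext fun ξ ↦ hcancel ξ
    exact (fourierTransformCLE ℂ 𝓢(EuclideanSpace ℝ (Fin d), ℂ)).injective hfe
  · intro g
    -- temperate growth of the inverse symbol
    have hproj : ∀ i : Fin d,
        Function.HasTemperateGrowth (fun ξ : EuclideanSpace ℝ (Fin d) ↦ ξ i) := by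
      intro i
      have := (EuclideanSpace.proj (𝕜 := ℝ) i).hasTemperateGrowth
      simpa using this
    have hsq : ∀ i : Fin d,
        Function.HasTemperateGrowth (fun ξ : EuclideanSpace ℝ (Fin d) ↦ (ξ i)^2) := by
      intro i
      have := HasTemperateGrowth.mul' (hproj i) (hproj i)
      simpa [pow_two] using this
    have hsum : Function.HasTemperateGrowth
        (fun ξ : EuclideanSpace ℝ (Fin d) ↦ ∑ i : Fin d, (ξ i)^2) :=
      HasTemperateGrowth.finsum Finset.univ _ (fun i _ ↦ hsq i)
    have hmul : Function.HasTemperateGrowth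
        (fun ξ : EuclideanSpace ℝ (Fin d) ↦ 4*π^2 * ∑ i : Fin d, (ξ i)^2) :=
      HasTemperateGrowth.mul' (Function.HasTemperateGrowth.const (4*π^2)) hsum
    have hφtemp : Function.HasTemperateGrowth
        (fun ξ : EuclideanSpace ℝ (Fin d) ↦ m^2 + 4*π^2 * ∑ i : Fin d, (ξ i)^2) :=
      HasTemperateGrowth.add' (Function.HasTemperateGrowth.const (m^2)) hmul
    have hψtemp : Function.HasTemperateGrowth
        (fun ξ : EuclideanSpace ℝ (Fin d) ↦ (m^2 + 4*π^2 * ∑ i : Fin d, (ξ i)^2)⁻¹) :=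
      HasTemperateGrowth.inv_of_le hφtemp (pow_pos hm 2)
        (fun ξ ↦ le_add_of_nonneg_right (by positivity))
    let M : 𝓢(EuclideanSpace ℝ (Fin d), ℂ) →L[ℝ] 𝓢(EuclideanSpace ℝ (Fin d), ℂ) :=
      SchwartzMap.bilinLeftCLM
        ((ContinuousLinearMap.lsmul ℝ ℝ : ℝ →L[ℝ] ℂ →L[ℝ] ℂ).flip) hψtemp
    set u := fourierTransformCLE ℂ 𝓢(EuclideanSpace ℝ (Fin d), ℂ) g with hu
    set h := M u with hh
    set f := (fourierTransformCLE ℂ 𝓢(EuclideanSpace ℝ (Fin d), ℂ)).symm h with hfdef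
    refine ⟨f, ?_⟩
    have hFf : ∀ ξ, 𝓕 (⇑f) ξ
        = ((m^2 + 4*π^2 * ∑ i : Fin d, (ξ i)^2)⁻¹ : ℝ) • u ξ := by
      intro ξ
      have hsymm : fourierTransformCLE ℂ 𝓢(EuclideanSpace ℝ (Fin d), ℂ) f = h := (fourierTransformCLE ℂ 𝓢(EuclideanSpace ℝ (Fin d), ℂ)).apply_symm_apply h
      calc 𝓕 (⇑f) ξ = (fourierTransformCLE ℂ 𝓢(EuclideanSpace ℝ (Fin d), ℂ) f) ξ := rfl
        _ = h ξ := by rw [hsymm]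
        _ = ((m^2 + 4*π^2 * ∑ i : Fin d, (ξ i)^2)⁻¹ : ℝ) • u ξ := rfl
    have hkey : massiveOp m f = g := by
      apply (fourierTransformCLE ℂ 𝓢(EuclideanSpace ℝ (Fin d), ℂ)).injective
      apply SchwartzMap.ext
      intro ξ
      show 𝓕 (⇑(massiveOp m f)) ξ = 𝓕 (⇑g) ξ
      rw [fourier_massiveOp, hFf ξ]
      have huξ : u ξ = 𝓕 (⇑g) ξ := rfl
      rw [huξ, Complex.real_smul]
      have hone : ((m^2 + 4*π^2 * ∑ i : Fin d, (ξ i)^2 : ℝ) : ℂ)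
          * (((m^2 + 4*π^2 * ∑ i : Fin d, (ξ i)^2)⁻¹ : ℝ) : ℂ) = 1 := by
        rw [← Complex.ofReal_mul, mul_inv_cancel₀ (hφpos ξ).ne']
        norm_num
      rw [← mul_assoc, hone, one_mul]
    intro x
    rw [← massiveOp_apply]
    exact DFunLike.congr_fun hkey x
end

section
/- Let f be a complex-valued Schwartz function on ℝ with f(0) = 0 and f'(0) = 0 (the derivative of f at 0 vanishes). Then there exists a Schwartz function h on ℝ such that f(k) = k²·h(k) for all k ∈ ℝ. -/
open Real MeasureTheory

namespace SchwartzDivAux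

/-- Iterated derivatives of a Schwartz function, as Schwartz functions. -/
noncomputable def fD (f : SchwartzMap ℝ ℂ) (m : ℕ) : SchwartzMap ℝ ℂ :=
  (SchwartzMap.derivCLM ℝ ℂ)^[m] f

lemma fD_zero (f : SchwartzMap ℝ ℂ) : fD f 0 = f := rfl

lemma fD_succ (f : SchwartzMap ℝ ℂ) (m : ℕ) :
    fD f (m + 1) = SchwartzMap.derivCLM ℝ ℂ (fD f m) :=
  Function.iterate_succ_apply' _ _ _

lemma fD_succ_coe (f : SchwartzMap ℝ ℂ) (m : ℕ) :
    ⇑(fD f (m + 1)) = deriv (⇑(fD f m)) := by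
  funext x
  rw [fD_succ, SchwartzMap.derivCLM_apply]

lemma hasDerivAt_fD (f : SchwartzMap ℝ ℂ) (m : ℕ) (x : ℝ) :
    HasDerivAt (⇑(fD f m)) (fD f (m + 1) x) x := by
  have h := ((fD f m).differentiable x).hasDerivAt
  rwa [show deriv (⇑(fD f m)) x = fD f (m + 1) x from by rw [fD_succ_coe]] at h

/-- The candidate quotient and its derivatives:
`g f n x = ∫ t in 0..1, (1-t) tⁿ f⁽ⁿ⁺²⁾(t x) dt`. -/
noncomputable def g (f : SchwartzMap ℝ ℂ) (n : ℕ) (x : ℝ) : ℂ :=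
  ∫ t in (0:ℝ)..1, ((1 - t) * t ^ n : ℝ) • fD f (n + 2) (t * x)

lemma contInt (f : SchwartzMap ℝ ℂ) (n m : ℕ) (x : ℝ) :
    Continuous fun t : ℝ => ((1 - t) * t ^ n : ℝ) • fD f m (t * x) :=
  ((continuous_const.sub continuous_id).mul (continuous_pow n)).smul
    ((fD f m).continuous.comp (continuous_id.mul continuous_const))

lemma g_hasDerivAt (f : SchwartzMap ℝ ℂ) (n : ℕ) (x₀ : ℝ) :
    HasDerivAt (g f n) (g f (n + 1) x₀) x₀ := by
  set C := SchwartzMap.seminorm ℝ 0 0 (fD f (n + 3)) with hC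
  have hmain := intervalIntegral.hasDerivAt_integral_of_dominated_loc_of_deriv_le
    (F := fun (x : ℝ) (t : ℝ) => ((1 - t) * t ^ n : ℝ) • fD f (n + 2) (t * x))
    (F' := fun (x : ℝ) (t : ℝ) => ((1 - t) * t ^ (n + 1) : ℝ) • fD f (n + 3) (t * x))
    (bound := fun _ => C) (a := 0) (b := 1) (μ := volume) (x₀ := x₀) (s := Set.univ)
    Filter.univ_mem
    (Filter.Eventually.of_forall fun x => (contInt f n (n + 2) x).aestronglyMeasurable)
    ((contInt f n (n + 2) x₀).intervalIntegrable 0 1)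
    (contInt f (n + 1) (n + 3) x₀).aestronglyMeasurable
    ?_ intervalIntegrable_const ?_
  · exact hmain.2
  · refine MeasureTheory.ae_of_all _ fun t ht x _ => ?_
    rw [Set.uIoc_of_le zero_le_one] at ht
    have h1 : ‖((1 - t) * t ^ (n + 1) : ℝ)‖ ≤ 1 := by
      rw [Real.norm_eq_abs, abs_mul, abs_pow]
      have h2 : |1 - t| ≤ 1 := by rw [abs_le]; constructor <;> nlinarith [ht.1, ht.2]
      have h3 : |t| ^ (n + 1) ≤ 1 := by
        apply pow_le_one₀ (abs_nonneg t)
        rw [abs_le]; constructor <;> nlinarith [ht.1, ht.2]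
      nlinarith [abs_nonneg (1 - t), pow_nonneg (abs_nonneg t) (n + 1)]
    have h4 := SchwartzMap.norm_le_seminorm ℝ (fD f (n + 3)) (t * x)
    calc ‖((1 - t) * t ^ (n + 1) : ℝ) • fD f (n + 3) (t * x)‖
        = ‖((1 - t) * t ^ (n + 1) : ℝ)‖ * ‖fD f (n + 3) (t * x)‖ := norm_smul _ _
      _ ≤ 1 * C := by
          apply mul_le_mul h1 h4 (norm_nonneg _) zero_le_one
      _ = C := one_mul C
  · refine MeasureTheory.ae_of_all _ fun t _ x _ => ?_
    have h1 : HasDerivAt (fun x : ℝ => t * x) t x := by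
      simpa using (hasDerivAt_id x).const_mul t
    have h2 : HasDerivAt (⇑(fD f (n + 2)) ∘ fun x : ℝ => t * x)
        (t • fD f (n + 3) (t * x)) x := (hasDerivAt_fD f (n + 2) (t * x)).scomp_of_eq x h1 rfl
    have h2' : HasDerivAt (fun x : ℝ => fD f (n + 2) (t * x))
        (t • fD f (n + 3) (t * x)) x := h2
    have h3 := h2'.const_smul (((1 - t) * t ^ n : ℝ))
    refine h3.congr_deriv ?_
    rw [smul_smul]
    congr 1
    ring

lemma g_deriv (f : SchwartzMap ℝ ℂ) (n : ℕ) : deriv (g f n) = g f (n + 1) :=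
  funext fun x => (g_hasDerivAt f n x).deriv

lemma iteratedDeriv_g (f : SchwartzMap ℝ ℂ) (n : ℕ) :
    iteratedDeriv n (g f 0) = g f n := by
  induction n with
  | zero => simp [iteratedDeriv_zero]
  | succ m ih => rw [iteratedDeriv_succ, ih, g_deriv]

lemma g_smooth (f : SchwartzMap ℝ ℂ) : ContDiff ℝ ((⊤ : ℕ∞)) (g f 0) :=
  contDiff_of_differentiable_iteratedDeriv fun m _ => by
    rw [iteratedDeriv_g f m]
    exact fun x => (g_hasDerivAt f m x).differentiableAt

end SchwartzDivAux

open SchwartzDivAux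

section Ident

variable (f : SchwartzMap ℝ ℂ) (h0 : f 0 = 0) (h1 : deriv (⇑f) 0 = 0)

include h0 h1 in
lemma ident0 (x : ℝ) : (x : ℂ) ^ 2 * g f 0 x = f x := by
  set w : ℝ → ℂ := fun t => ((1 - t) * x : ℝ) • fD f 1 (t * x) + fD f 0 (t * x) with hw
  have hderiv : ∀ t ∈ Set.uIcc (0:ℝ) 1,
      HasDerivAt w (((1 - t) * x ^ 2 : ℝ) • fD f 2 (t * x)) t := by
    intro t _
    have h1' : HasDerivAt (fun t : ℝ => t * x) x t := by
      simpa using (hasDerivAt_id t).mul_const x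
    have hA0 : HasDerivAt (⇑(fD f 1) ∘ fun t : ℝ => t * x) (x • fD f 2 (t * x)) t :=
      (hasDerivAt_fD f 1 (t * x)).scomp_of_eq t h1' rfl
    have hA : HasDerivAt (fun t : ℝ => fD f 1 (t * x)) (x • fD f 2 (t * x)) t := hA0
    have hc : HasDerivAt (fun t : ℝ => ((1 - t) * x : ℝ)) (-x) t := by
      simpa using ((hasDerivAt_id t).const_sub 1).mul_const x
    have hB := hc.smul hA
    have hC0 : HasDerivAt (⇑(fD f 0) ∘ fun t : ℝ => t * x) (x • fD f 1 (t * x)) t :=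
      (hasDerivAt_fD f 0 (t * x)).scomp_of_eq t h1' rfl
    have hC : HasDerivAt (fun t : ℝ => fD f 0 (t * x)) (x • fD f 1 (t * x)) t := hC0
    have hcomb := hB.add hC
    refine hcomb.congr_deriv ?_
    simp only [Complex.real_smul]
    push_cast
    ring
  have hint : IntervalIntegrable (fun t => ((1 - t) * x ^ 2 : ℝ) • fD f 2 (t * x))
      volume 0 1 := by
    apply Continuous.intervalIntegrable
    exact ((continuous_const.sub continuous_id).mul continuous_const).smul
      ((fD f 2).continuous.comp (continuous_id.mul continuous_const))
  have hFTC := intervalIntegral.integral_eq_sub_of_hasDerivAt hderiv hint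
  have hw1 : w 1 = f x := by
    simp [hw, fD_zero]
  have hw0 : w 0 = 0 := by
    have hfd1 : fD f 1 0 = 0 := by
      rw [fD_succ, SchwartzMap.derivCLM_apply, fD_zero, h1]
    simp [hw, fD_zero, h0, hfd1]
  have hinteq : (fun t : ℝ => (x:ℂ) ^ 2 * (((1 - t) * t ^ 0 : ℝ) • fD f 2 (t * x)))
      = fun t : ℝ => ((1 - t) * x ^ 2 : ℝ) • fD f 2 (t * x) := by
    funext t
    simp only [pow_zero, mul_one, Complex.real_smul]
    push_cast
    ring
  calc (x : ℂ) ^ 2 * g f 0 x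
      = ∫ t in (0:ℝ)..1, (x:ℂ) ^ 2 * (((1 - t) * t ^ 0 : ℝ) • fD f 2 (t * x)) := by
        rw [g, ← intervalIntegral.integral_const_mul]
    _ = ∫ t in (0:ℝ)..1, ((1 - t) * x ^ 2 : ℝ) • fD f 2 (t * x) := by rw [hinteq]
    _ = w 1 - w 0 := hFTC
    _ = f x := by rw [hw1, hw0, sub_zero]

lemma hasDerivAt_ofReal (x : ℝ) : HasDerivAt (fun y : ℝ => (y : ℂ)) 1 x := by
  simpa using (hasDerivAt_id x).ofReal_comp

lemma hsq (x : ℝ) : HasDerivAt (fun y : ℝ => (y : ℂ) ^ 2) (2 * x) x := by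
  have h := (hasDerivAt_ofReal x).mul (hasDerivAt_ofReal x)
  have he : ((fun y : ℝ => (y : ℂ)) * fun y : ℝ => (y : ℂ)) = fun y : ℝ => (y : ℂ) ^ 2 := by
    funext y; simp only [Pi.mul_apply]; ring
  rw [he] at h
  refine h.congr_deriv ?_
  ring

/-- Derivative of a generic combination appearing in the Leibniz identity. -/
lemma comb (f : SchwartzMap ℝ ℂ) (a b c : ℂ) (m k j : ℕ) (x : ℝ) :
    HasDerivAt (fun y : ℝ => a * (y:ℂ) ^ 2 * g f m y + b * (y:ℂ) * g f k y + c * g f j y)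
      (a * (2 * (x:ℂ) * g f m x + (x:ℂ) ^ 2 * g f (m + 1) x)
        + b * (g f k x + (x:ℂ) * g f (k + 1) x) + c * g f (j + 1) x) x := by
  have hA : HasDerivAt (fun y : ℝ => a * (y:ℂ) ^ 2 * g f m y)
      (a * (2 * (x:ℂ) * g f m x + (x:ℂ) ^ 2 * g f (m + 1) x)) x := by
    have h := ((hsq x).const_mul a).mul (g_hasDerivAt f m x)
    refine h.congr_deriv ?_
    ring
  have hB : HasDerivAt (fun y : ℝ => b * (y:ℂ) * g f k y)
      (b * (g f k x + (x:ℂ) * g f (k + 1) x)) x := by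
    have h := ((hasDerivAt_ofReal x).const_mul b).mul (g_hasDerivAt f k x)
    refine h.congr_deriv ?_
    ring
  have hC : HasDerivAt (fun y : ℝ => c * g f j y) (c * g f (j + 1) x) x :=
    (g_hasDerivAt f j x).const_mul c
  exact (hA.add hB).add hC

include h0 h1 in
lemma ident1 (x : ℝ) :
    (fD f 1 : ℝ → ℂ) x = (x:ℂ) ^ 2 * g f 1 x + 2 * (x:ℂ) * g f 0 x := by
  have hfe : ⇑f = fun y : ℝ => 1 * (y:ℂ) ^ 2 * g f 0 y + 0 * (y:ℂ) * g f 0 y + 0 * g f 0 y := by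
    funext y
    rw [show (1 : ℂ) * (y:ℂ) ^ 2 * g f 0 y + 0 * (y:ℂ) * g f 0 y + 0 * g f 0 y
      = (y:ℂ) ^ 2 * g f 0 y from by ring]
    exact (ident0 f h0 h1 y).symm
  rw [fD_succ_coe, fD_zero, hfe, (comb f 1 0 0 0 0 0 x).deriv]
  ring

include h0 h1 in
lemma identN (n : ℕ) (x : ℝ) :
    (fD f (n + 2) : ℝ → ℂ) x = (x:ℂ) ^ 2 * g f (n + 2) x
      + ((2 * (n + 2) : ℕ) : ℂ) * (x:ℂ) * g f (n + 1) x
      + (((n + 2) * (n + 1) : ℕ) : ℂ) * g f n x := by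
  induction n generalizing x with
  | zero =>
    have hfe : ⇑(fD f 1) = fun y : ℝ =>
        1 * (y:ℂ) ^ 2 * g f 1 y + 2 * (y:ℂ) * g f 0 y + 0 * g f 0 y := by
      funext y
      rw [ident1 f h0 h1 y]
      ring
    rw [fD_succ_coe, hfe, (comb f 1 2 0 1 0 0 x).deriv]
    push_cast
    ring
  | succ m ih =>
    have hfe : ⇑(fD f (m + 2)) = fun y : ℝ =>
        1 * (y:ℂ) ^ 2 * g f (m + 2) y + ((2 * (m + 2) : ℕ) : ℂ) * (y:ℂ) * g f (m + 1) y
          + (((m + 2) * (m + 1) : ℕ) : ℂ) * g f m y := by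
      funext y
      rw [ih y]
      ring
    rw [show m + 1 + 2 = (m + 2) + 1 from rfl, fD_succ_coe, hfe,
      (comb f 1 ((2 * (m + 2) : ℕ) : ℂ) (((m + 2) * (m + 1) : ℕ) : ℂ)
        (m + 2) (m + 1) m x).deriv]
    push_cast
    ring

include h0 h1 in
lemma gdecay (n : ℕ) : ∀ k : ℕ, ∃ C : ℝ, ∀ x : ℝ, 1 ≤ |x| → |x| ^ k * ‖g f n x‖ ≤ C := by
  have aux : ∀ (n k : ℕ) (x : ℝ), 1 ≤ |x| →
      |x| ^ k * ‖g f n x‖ ≤ |x| ^ k * ‖(x:ℂ) ^ 2 * g f n x‖ := by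
    intro n k x hx
    have h2 : ‖(x:ℂ) ^ 2 * g f n x‖ = |x| ^ 2 * ‖g f n x‖ := by
      rw [norm_mul, norm_pow, Complex.norm_real, Real.norm_eq_abs]
    rw [h2]
    have h4 : 1 ≤ |x| ^ 2 := one_le_pow₀ hx
    have h3 : ‖g f n x‖ ≤ |x| ^ 2 * ‖g f n x‖ :=
      le_mul_of_one_le_left (norm_nonneg _) h4
    nlinarith [pow_nonneg (abs_nonneg x) k, norm_nonneg (g f n x)]
  induction n using Nat.strong_induction_on with
  | _ n IH =>
    intro k
    match n, IH with
    | 0, _ =>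
      refine ⟨SchwartzMap.seminorm ℝ k 0 f, fun x hx => ?_⟩
      calc |x| ^ k * ‖g f 0 x‖ ≤ |x| ^ k * ‖(x:ℂ) ^ 2 * g f 0 x‖ := aux 0 k x hx
        _ = |x| ^ k * ‖f x‖ := by rw [ident0 f h0 h1 x]
        _ ≤ SchwartzMap.seminorm ℝ k 0 f := by
            have := SchwartzMap.le_seminorm' ℝ k 0 f x
            simpa using this
    | 1, IH =>
      obtain ⟨C0, hC0⟩ := IH 0 one_pos (k + 1)
      refine ⟨SchwartzMap.seminorm ℝ k 0 (fD f 1) + 2 * C0, fun x hx => ?_⟩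
      have hid : (x:ℂ) ^ 2 * g f 1 x = fD f 1 x - 2 * (x:ℂ) * g f 0 x := by
        rw [ident1 f h0 h1 x]; ring
      have hnorm : ‖(x:ℂ) ^ 2 * g f 1 x‖ ≤ ‖fD f 1 x‖ + 2 * (|x| * ‖g f 0 x‖) := by
        rw [hid]
        calc ‖fD f 1 x - 2 * (x:ℂ) * g f 0 x‖
            ≤ ‖fD f 1 x‖ + ‖2 * (x:ℂ) * g f 0 x‖ := norm_sub_le _ _
          _ = ‖fD f 1 x‖ + 2 * (|x| * ‖g f 0 x‖) := by
              rw [norm_mul, norm_mul, Complex.norm_real, Real.norm_eq_abs]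
              norm_num
              ring
      have hsem := SchwartzMap.le_seminorm' ℝ k 0 (fD f 1) x
      simp only [iteratedDeriv_zero] at hsem
      have hC0x := hC0 x hx
      have hpk : (0:ℝ) ≤ |x| ^ k := pow_nonneg (abs_nonneg x) k
      calc |x| ^ k * ‖g f 1 x‖ ≤ |x| ^ k * ‖(x:ℂ) ^ 2 * g f 1 x‖ := aux 1 k x hx
        _ ≤ |x| ^ k * (‖fD f 1 x‖ + 2 * (|x| * ‖g f 0 x‖)) :=
            mul_le_mul_of_nonneg_left hnorm hpk
        _ = |x| ^ k * ‖fD f 1 x‖ + 2 * (|x| ^ (k + 1) * ‖g f 0 x‖) := by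
            rw [pow_succ]; ring
        _ ≤ SchwartzMap.seminorm ℝ k 0 (fD f 1) + 2 * C0 := by
            nlinarith
    | (m + 2), IH =>
      obtain ⟨C1, hC1⟩ := IH (m + 1) (by omega) (k + 1)
      obtain ⟨C2, hC2⟩ := IH m (by omega) k
      refine ⟨SchwartzMap.seminorm ℝ k 0 (fD f (m + 2))
        + (2 * (m + 2) : ℕ) * C1 + ((m + 2) * (m + 1) : ℕ) * C2, fun x hx => ?_⟩
      have hid : (x:ℂ) ^ 2 * g f (m + 2) x = fD f (m + 2) x
          - ((2 * (m + 2) : ℕ) : ℂ) * (x:ℂ) * g f (m + 1) x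
          - (((m + 2) * (m + 1) : ℕ) : ℂ) * g f m x := by
        rw [identN f h0 h1 m x]; ring
      have hnorm : ‖(x:ℂ) ^ 2 * g f (m + 2) x‖ ≤ ‖fD f (m + 2) x‖
          + (2 * (m + 2) : ℕ) * (|x| * ‖g f (m + 1) x‖)
          + ((m + 2) * (m + 1) : ℕ) * ‖g f m x‖ := by
        rw [hid]
        calc ‖fD f (m + 2) x - ((2 * (m + 2) : ℕ) : ℂ) * (x:ℂ) * g f (m + 1) x
              - (((m + 2) * (m + 1) : ℕ) : ℂ) * g f m x‖
            ≤ ‖fD f (m + 2) x - ((2 * (m + 2) : ℕ) : ℂ) * (x:ℂ) * g f (m + 1) x‖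
              + ‖(((m + 2) * (m + 1) : ℕ) : ℂ) * g f m x‖ := norm_sub_le _ _
          _ ≤ ‖fD f (m + 2) x‖ + ‖((2 * (m + 2) : ℕ) : ℂ) * (x:ℂ) * g f (m + 1) x‖
              + ‖(((m + 2) * (m + 1) : ℕ) : ℂ) * g f m x‖ := by
              have := norm_sub_le (fD f (m + 2) x)
                (((2 * (m + 2) : ℕ) : ℂ) * (x:ℂ) * g f (m + 1) x)
              linarith
          _ = ‖fD f (m + 2) x‖ + (2 * (m + 2) : ℕ) * (|x| * ‖g f (m + 1) x‖)
              + ((m + 2) * (m + 1) : ℕ) * ‖g f m x‖ := by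
              rw [norm_mul, norm_mul, Complex.norm_real, Real.norm_eq_abs,
                Complex.norm_natCast, norm_mul, Complex.norm_natCast]
              ring
      have hsem := SchwartzMap.le_seminorm' ℝ k 0 (fD f (m + 2)) x
      simp only [iteratedDeriv_zero] at hsem
      have hC1x := hC1 x hx
      have hC2x := hC2 x hx
      have hpk : (0:ℝ) ≤ |x| ^ k := pow_nonneg (abs_nonneg x) k
      have hcoef1 : (0:ℝ) ≤ (2 * (m + 2) : ℕ) := by positivity
      have hcoef2 : (0:ℝ) ≤ ((m + 2) * (m + 1) : ℕ) := by positivity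
      calc |x| ^ k * ‖g f (m + 2) x‖
          ≤ |x| ^ k * ‖(x:ℂ) ^ 2 * g f (m + 2) x‖ := aux (m + 2) k x hx
        _ ≤ |x| ^ k * (‖fD f (m + 2) x‖ + (2 * (m + 2) : ℕ) * (|x| * ‖g f (m + 1) x‖)
              + ((m + 2) * (m + 1) : ℕ) * ‖g f m x‖) :=
            mul_le_mul_of_nonneg_left hnorm hpk
        _ = |x| ^ k * ‖fD f (m + 2) x‖
              + (2 * (m + 2) : ℕ) * (|x| ^ (k + 1) * ‖g f (m + 1) x‖)
              + ((m + 2) * (m + 1) : ℕ) * (|x| ^ k * ‖g f m x‖) := by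
            rw [pow_succ]; ring
        _ ≤ SchwartzMap.seminorm ℝ k 0 (fD f (m + 2))
              + (2 * (m + 2) : ℕ) * C1 + ((m + 2) * (m + 1) : ℕ) * C2 := by
            have e1 : (2 * (m + 2) : ℕ) * (|x| ^ (k + 1) * ‖g f (m + 1) x‖)
                ≤ (2 * (m + 2) : ℕ) * C1 := mul_le_mul_of_nonneg_left hC1x hcoef1
            have e2 : ((m + 2) * (m + 1) : ℕ) * (|x| ^ k * ‖g f m x‖)
                ≤ ((m + 2) * (m + 1) : ℕ) * C2 := mul_le_mul_of_nonneg_left hC2x hcoef2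
            have e0 : |x| ^ k * ‖fD f (m + 2) x‖
                ≤ SchwartzMap.seminorm ℝ k 0 (fD f (m + 2)) := by simpa using hsem
            linarith

include h0 h1 in
lemma g_decay' : ∀ k n : ℕ, ∃ C : ℝ, ∀ x : ℝ,
    ‖x‖ ^ k * ‖iteratedFDeriv ℝ n (g f 0) x‖ ≤ C := by
  intro k n
  have hcont : ContinuousOn (g f n) (Set.Icc (-1:ℝ) 1) :=
    (Differentiable.continuous fun x => (g_hasDerivAt f n x).differentiableAt).continuousOn
  obtain ⟨C₁, hC₁⟩ := (isCompact_Icc (a := (-1:ℝ)) (b := 1)).exists_bound_of_continuousOn hcont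
  have hC₁0 : 0 ≤ C₁ :=
    (norm_nonneg (g f n 0)).trans (hC₁ 0 (by constructor <;> norm_num))
  obtain ⟨C₂, hC₂⟩ := gdecay f h0 h1 n k
  refine ⟨max C₁ C₂, fun x => ?_⟩
  rw [norm_iteratedFDeriv_eq_norm_iteratedDeriv, iteratedDeriv_g, Real.norm_eq_abs]
  rcases le_or_gt (|x|) 1 with hx | hx
  · have h1' : |x| ^ k ≤ 1 := pow_le_one₀ (abs_nonneg x) hx
    have h2 : ‖g f n x‖ ≤ C₁ := hC₁ x (abs_le.mp hx)
    calc |x| ^ k * ‖g f n x‖ ≤ 1 * C₁ :=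
        mul_le_mul h1' h2 (norm_nonneg _) zero_le_one
      _ = C₁ := one_mul C₁
      _ ≤ max C₁ C₂ := le_max_left _ _
  · exact (hC₂ x hx.le).trans (le_max_right _ _)

end Ident

/-- A complex-valued Schwartz function on `ℝ` with a double zero at the origin can be divided
by `k²` within Schwartz space (Theorem 5.2 of the paper, controlling the IR divergence). -/
theorem schwartz_div_double_zero (f : SchwartzMap ℝ ℂ) (h0 : f 0 = 0)
    (h1 : deriv (⇑f) 0 = 0) :
    ∃ h : SchwartzMap ℝ ℂ, ∀ k : ℝ, f k = (k : ℂ) ^ 2 * h k := by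
  refine ⟨⟨g f 0, g_smooth f, g_decay' f h0 h1⟩, fun k => ?_⟩
  exact (ident0 f h0 h1 k).symm
end

section
/- Let f be a complex-valued Schwartz function on ℝ. Then ∫_ℝ f(x) dx = 0 and ∫_ℝ x·f(x) dx = 0 if and only if there exists a Schwartz function h on ℝ with h''(x) = f(x) for all x ∈ ℝ (where h'' denotes the second derivative of h). -/
open Real MeasureTheory

section SchwartzAuxSection

open Filter Topology Set
open scoped ContDiff

namespace SchwartzAux

lemma div_norm_tendsto (C : ℝ) :
    Tendsto (fun x : ℝ => C / ‖x‖) (cocompact ℝ) (𝓝 0) :=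
  (tendsto_const_nhds.div_atTop tendsto_id).comp tendsto_norm_cocompact_atTop

/-- A Schwartz function times the identity tends to zero at cocompact. -/
lemma id_mul_tendsto_cocompact (g : SchwartzMap ℝ ℂ) :
    Tendsto (fun x : ℝ => (x : ℂ) * g x) (cocompact ℝ) (𝓝 0) := by
  obtain ⟨C, hCpos, hC⟩ := g.decay 2 0
  refine squeeze_zero_norm' ?_ (div_norm_tendsto C)
  filter_upwards [tendsto_norm_cocompact_atTop.eventually_ge_atTop 1] with x hx
  have hx0 : (0:ℝ) < ‖x‖ := lt_of_lt_of_le one_pos hx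
  rw [div_eq_mul_inv, ← mul_le_mul_iff_left₀ hx0]
  have h2 : ‖x‖ ^ 2 * ‖g x‖ ≤ C := by simpa using hC x
  have hne : ‖x‖ ≠ 0 := ne_of_gt hx0
  calc ‖(x : ℂ) * g x‖ * ‖x‖ = ‖x‖ ^ 2 * ‖g x‖ := by
        rw [norm_mul, Complex.norm_real]; ring
    _ ≤ C := h2
    _ = C * ‖x‖⁻¹ * ‖x‖ := by rw [mul_assoc, inv_mul_cancel₀ hne, mul_one]

lemma tendsto_cocompact (g : SchwartzMap ℝ ℂ) :
    Tendsto (⇑g) (cocompact ℝ) (𝓝 0) := by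
  obtain ⟨C, hCpos, hC⟩ := g.decay 1 0
  refine squeeze_zero_norm' ?_ (div_norm_tendsto C)
  filter_upwards [tendsto_norm_cocompact_atTop.eventually_ge_atTop 1] with x hx
  have hx0 : (0:ℝ) < ‖x‖ := lt_of_lt_of_le one_pos hx
  rw [le_div_iff₀ hx0, mul_comm]
  simpa using hC x

lemma integrable_id_mul (g : SchwartzMap ℝ ℂ) :
    Integrable (fun x : ℝ => (x : ℂ) * g x) := by
  refine (g.integrable_pow_mul volume 1).mono' ?_ ?_
  · exact (Complex.continuous_ofReal.comp continuous_id).mul g.continuous |>.aestronglyMeasurable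
  · refine Filter.Eventually.of_forall fun x => ?_
    simp [norm_mul, Complex.norm_real]

end SchwartzAux

namespace SchwartzAux

lemma atBot_le_cocompact : (atBot : Filter ℝ) ≤ cocompact ℝ :=
  (cocompact_eq_atBot_atTop (α := ℝ)) ▸ le_sup_left

lemma atTop_le_cocompact : (atTop : Filter ℝ) ≤ cocompact ℝ :=
  (cocompact_eq_atBot_atTop (α := ℝ)) ▸ le_sup_right

lemma deriv_eq_derivCLM (g : SchwartzMap ℝ ℂ) :
    deriv (⇑g) = ⇑(SchwartzMap.derivCLM ℝ ℂ g) :=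
  funext fun x => (SchwartzMap.derivCLM_apply (𝕜 := ℝ) (F := ℂ) g x).symm

lemma integral_deriv_eq_zero (g : SchwartzMap ℝ ℂ) : (∫ x : ℝ, deriv (⇑g) x) = 0 := by
  have hd : ∀ x : ℝ, HasDerivAt (⇑g) (deriv (⇑g) x) x :=
    fun x => g.differentiableAt.hasDerivAt
  have hint : Integrable (deriv (⇑g)) := by
    rw [deriv_eq_derivCLM]; exact (SchwartzMap.derivCLM ℝ ℂ g).integrable
  have h := integral_of_hasDerivAt_of_tendsto hd hint
    ((tendsto_cocompact g).mono_left atBot_le_cocompact)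
    ((tendsto_cocompact g).mono_left atTop_le_cocompact)
  simpa using h

lemma hasDerivAt_ofReal (x : ℝ) : HasDerivAt (fun t : ℝ => (t : ℂ)) 1 x := by
  simpa using (hasDerivAt_id x).ofReal_comp

lemma integral_id_mul_deriv (g : SchwartzMap ℝ ℂ) :
    (∫ x : ℝ, (x : ℂ) * deriv (⇑g) x) = - ∫ x : ℝ, g x := by
  have hd : ∀ x : ℝ, HasDerivAt (⇑g) (deriv (⇑g) x) x :=
    fun x => g.differentiableAt.hasDerivAt
  have huv' : Integrable ((fun x : ℝ => (x : ℂ)) * deriv (⇑g)) := by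
    have := integrable_id_mul (SchwartzMap.derivCLM ℝ ℂ g)
    rw [deriv_eq_derivCLM]; exact this
  have hu'v : Integrable ((fun _ : ℝ => (1 : ℂ)) * ⇑g) := by
    simpa [Pi.mul_def] using g.integrable (μ := volume)
  have huv : Integrable ((fun x : ℝ => (x : ℂ)) * ⇑g) := integrable_id_mul g
  have h := integral_mul_deriv_eq_deriv_mul_of_integrable
    (u := fun x : ℝ => (x : ℂ)) (u' := fun _ => (1 : ℂ)) (v := ⇑g) (v' := deriv (⇑g))
    (fun x _ => hasDerivAt_ofReal x) (fun x _ => hd x) huv' hu'v huv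
  simpa using h

end SchwartzAux

namespace SchwartzAux

lemma exists_antideriv (f : SchwartzMap ℝ ℂ) (hf : (∫ x : ℝ, f x) = 0) :
    ∃ F : SchwartzMap ℝ ℂ, ∀ x : ℝ, deriv (⇑F) x = f x := by
  set Fn : ℝ → ℂ := fun x => ∫ t in Iic x, f t with hFn
  have hint : Integrable (⇑f) := f.integrable
  have hF0 : ∀ y : ℝ, Fn y = Fn 0 + ∫ t in (0:ℝ)..y, f t := by
    intro y
    rw [← intervalIntegral.integral_Iic_sub_Iic hint.integrableOn hint.integrableOn]
    ring
  have hFd : ∀ x : ℝ, HasDerivAt Fn (f x) x := by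
    intro x
    have h1 : HasDerivAt (fun u => Fn 0 + ∫ t in (0:ℝ)..u, f t) (f x) x :=
      ((f.continuous.integral_hasStrictDerivAt 0 x).hasDerivAt).const_add (Fn 0)
    have he : (fun u => Fn 0 + ∫ t in (0:ℝ)..u, f t) = Fn := funext fun y => (hF0 y).symm
    rwa [he] at h1
  have hderiv : deriv Fn = ⇑f := funext fun x => (hFd x).deriv
  have hsmooth : ContDiff ℝ ∞ Fn := by
    rw [contDiff_infty_iff_deriv]
    exact ⟨fun x => (hFd x).differentiableAt, hderiv ▸ f.smooth'⟩
  have hdecay : ∀ k n : ℕ, ∃ C : ℝ, ∀ x, ‖x‖ ^ k * ‖iteratedFDeriv ℝ n Fn x‖ ≤ C := by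
    intro k n
    match n with
    | 0 =>
      have hintk : Integrable (fun t : ℝ => ‖t‖ ^ k * ‖f t‖) := f.integrable_pow_mul volume k
      refine ⟨∫ t : ℝ, ‖t‖ ^ k * ‖f t‖, fun x => ?_⟩
      rw [norm_iteratedFDeriv_zero]
      have key : ‖x‖ ^ k * ‖Fn x‖ ≤ ∫ t : ℝ, ‖t‖ ^ k * ‖f t‖ := by
        rcases le_or_gt 0 x with hx | hx
        · have hsplit : Fn x = - ∫ t in Ioi x, f t := by
            have h2 := intervalIntegral.integral_Iic_add_Ioi (b := x) (f := ⇑f) (μ := volume)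
              hint.integrableOn hint.integrableOn
            rw [hf] at h2
            simpa [hFn] using eq_neg_of_add_eq_zero_left h2
          rw [hsplit, norm_neg]
          calc ‖x‖ ^ k * ‖∫ t in Ioi x, f t‖
              ≤ ‖x‖ ^ k * ∫ t in Ioi x, ‖f t‖ :=
                mul_le_mul_of_nonneg_left (norm_integral_le_integral_norm _) (by positivity)
            _ = ∫ t in Ioi x, ‖x‖ ^ k * ‖f t‖ := (integral_const_mul _ _).symm
            _ ≤ ∫ t in Ioi x, ‖t‖ ^ k * ‖f t‖ := by
                refine setIntegral_mono_on
                  ((hint.norm.const_mul _).integrableOn) hintk.integrableOn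
                  measurableSet_Ioi fun t ht => ?_
                have hxt : ‖x‖ ≤ ‖t‖ := by
                  rw [Real.norm_eq_abs, Real.norm_eq_abs, abs_of_nonneg hx,
                    abs_of_nonneg (hx.trans (le_of_lt ht))]
                  exact le_of_lt ht
                gcongr
            _ ≤ ∫ t : ℝ, ‖t‖ ^ k * ‖f t‖ :=
                setIntegral_le_integral hintk (Filter.Eventually.of_forall fun t => by positivity)
        · calc ‖x‖ ^ k * ‖Fn x‖
              ≤ ‖x‖ ^ k * ∫ t in Iic x, ‖f t‖ :=
                mul_le_mul_of_nonneg_left (norm_integral_le_integral_norm _) (by positivity)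
            _ = ∫ t in Iic x, ‖x‖ ^ k * ‖f t‖ := (integral_const_mul _ _).symm
            _ ≤ ∫ t in Iic x, ‖t‖ ^ k * ‖f t‖ := by
                refine setIntegral_mono_on
                  ((hint.norm.const_mul _).integrableOn) hintk.integrableOn
                  measurableSet_Iic fun t ht => ?_
                have hxt : ‖x‖ ≤ ‖t‖ := by
                  rw [Real.norm_eq_abs, Real.norm_eq_abs, abs_of_neg hx,
                    abs_of_nonpos (le_of_lt (lt_of_le_of_lt ht.out hx))]
                  exact neg_le_neg ht.out
                gcongr
            _ ≤ ∫ t : ℝ, ‖t‖ ^ k * ‖f t‖ :=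
                setIntegral_le_integral hintk (Filter.Eventually.of_forall fun t => by positivity)
      exact key
    | n + 1 =>
      obtain ⟨C, hC⟩ := f.decay' k n
      refine ⟨C, fun x => ?_⟩
      have h1 : iteratedDeriv (n + 1) Fn = iteratedDeriv n (⇑f) := by
        rw [iteratedDeriv_succ', hderiv]
      calc ‖x‖ ^ k * ‖iteratedFDeriv ℝ (n + 1) Fn x‖
          = ‖x‖ ^ k * ‖iteratedDeriv (n + 1) Fn x‖ := by
            rw [norm_iteratedFDeriv_eq_norm_iteratedDeriv]
        _ = ‖x‖ ^ k * ‖iteratedFDeriv ℝ n (⇑f) x‖ := by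
            rw [h1, ← norm_iteratedFDeriv_eq_norm_iteratedDeriv]
        _ ≤ C := hC x
  exact ⟨⟨Fn, hsmooth, hdecay⟩, fun x => congrFun hderiv x⟩

end SchwartzAux

end SchwartzAuxSection

/-- A complex-valued Schwartz function on `ℝ` has vanishing zeroth and first moments if and
only if it is the second derivative of a Schwartz function. -/
theorem schwartz_moments_iff_second_deriv (f : SchwartzMap ℝ ℂ) :
    ((∫ x : ℝ, f x) = 0 ∧ (∫ x : ℝ, (x : ℂ) * f x) = 0) ↔
      ∃ h : SchwartzMap ℝ ℂ, ∀ x : ℝ, deriv (deriv (⇑h)) x = f x := by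
  constructor
  · rintro ⟨h1, h2⟩
    obtain ⟨g, hg⟩ := SchwartzAux.exists_antideriv f h1
    have hgfun : deriv (⇑g) = ⇑f := funext hg
    have hg0 : (∫ x : ℝ, g x) = 0 := by
      have h3 := SchwartzAux.integral_id_mul_deriv g
      rw [hgfun, h2] at h3
      exact neg_eq_zero.mp h3.symm
    obtain ⟨h, hh⟩ := SchwartzAux.exists_antideriv g hg0
    exact ⟨h, fun x => by rw [funext hh, hg x]⟩
  · rintro ⟨h, hh⟩
    set g := SchwartzMap.derivCLM ℝ ℂ h with hgdef
    have hg : ⇑g = deriv (⇑h) := (SchwartzAux.deriv_eq_derivCLM h).symm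
    have e2 : deriv (⇑g) = ⇑f := by
      rw [hg]; exact funext hh
    constructor
    · rw [← e2]; exact SchwartzAux.integral_deriv_eq_zero g
    · have h3 := SchwartzAux.integral_id_mul_deriv g
      rw [e2] at h3
      rw [h3, hg]
      rw [SchwartzAux.integral_deriv_eq_zero h, neg_zero]
end

section
/- Let d ≥ 1 and let φ, ψ ∈ MvPolynomial (Fin d) ℂ be harmonic polynomials, i.e. ∑_{i} ∂²φ/∂x_i² = 0 and ∑_{i} ∂²ψ/∂x_i² = 0 (with ∂/∂x_i the formal partial derivative pderiv i). Then ∑_{α : Fin d →₀ ℕ} (∏_i (α i)!) · conj(coeff α φ) · (coeff α ψ) = (2π)^{-d/2} · ∫_{ℝ^d} conj(φ(x)) · ψ(x) · e^{-‖x‖²/2} dx, where φ(x) denotes the evaluation of φ at the (complexified) point x ∈ ℝ^d, and the sum on the left has only finitely many nonzero terms. -/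
open Real MeasureTheory MvPolynomial

namespace FG


/-- 1D: `t^n e^{-t²/2}` is integrable. -/
lemma int1 (n : ℕ) : Integrable (fun t : ℝ => t ^ n * rexp (-t ^ 2 / 2)) := by
  have hint : Integrable (fun t : ℝ => (n.factorial * Real.exp 1) * rexp (-(1/4) * t ^ 2)) :=
    (integrable_exp_neg_mul_sq (by norm_num : (0:ℝ) < 1/4)).const_mul _
  refine hint.mono' (Continuous.aestronglyMeasurable (by continuity)) ?_
  filter_upwards with t
  have h1 : |t| ^ n ≤ n.factorial * rexp |t| := by
    have := Real.pow_div_factorial_le_exp |t| (abs_nonneg t) n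
    have hf : (0:ℝ) < n.factorial := by positivity
    calc |t| ^ n = |t| ^ n / n.factorial * n.factorial := by field_simp
      _ ≤ rexp |t| * n.factorial := by gcongr
      _ = n.factorial * rexp |t| := by ring
  have h2 : rexp |t| * rexp (-t ^ 2 / 2) ≤ rexp 1 * rexp (-(1/4) * t^2) := by
    rw [← Real.exp_add, ← Real.exp_add]
    apply Real.exp_le_exp.2
    nlinarith [sq_nonneg (|t| - 2), sq_abs t]
  calc ‖t ^ n * rexp (-t ^ 2 / 2)‖ = |t| ^ n * rexp (-t ^ 2 / 2) := by
        rw [norm_mul, norm_pow, Real.norm_eq_abs, Real.norm_eq_abs,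
          abs_of_nonneg (Real.exp_nonneg _)]
    _ ≤ (n.factorial * rexp |t|) * rexp (-t ^ 2 / 2) := by
        gcongr
    _ = n.factorial * (rexp |t| * rexp (-t ^ 2 / 2)) := by ring
    _ ≤ n.factorial * (rexp 1 * rexp (-(1/4) * t^2)) := by
        have hf : (0:ℝ) ≤ n.factorial := by positivity
        exact mul_le_mul_of_nonneg_left h2 hf
    _ = (n.factorial * Real.exp 1) * rexp (-(1/4) * t ^ 2) := by ring

/-- 1D moment recursion via integration by parts. -/
lemma mom (n : ℕ) : ∫ t : ℝ, t ^ (n + 1) * rexp (-t ^ 2 / 2)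
    = n * ∫ t : ℝ, t ^ (n - 1) * rexp (-t ^ 2 / 2) := by
  have hderiv : ∀ t : ℝ, HasDerivAt (fun t : ℝ => t ^ n * rexp (-t ^ 2 / 2))
      ((n : ℝ) * t ^ (n - 1) * rexp (-t ^ 2 / 2) - t ^ (n + 1) * rexp (-t ^ 2 / 2)) t := by
    intro t
    have he : HasDerivAt (fun t : ℝ => rexp (-t ^ 2 / 2)) (rexp (-t ^ 2 / 2) * (-t)) t := by
      have h1 : HasDerivAt (fun t : ℝ => -t ^ 2 / 2) (-t) t := by
        have := ((hasDerivAt_pow 2 t).neg).div_const 2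
        exact this.congr_deriv (by push_cast; ring)
      simpa [mul_comm] using h1.exp
    have hp : HasDerivAt (fun t : ℝ => t ^ n) ((n : ℝ) * t ^ (n - 1)) t := hasDerivAt_pow n t
    have := hp.mul he
    exact this.congr_deriv (by ring)
  have h0 : Integrable (fun t : ℝ => (n : ℝ) * t ^ (n - 1) * rexp (-t ^ 2 / 2) -
      t ^ (n + 1) * rexp (-t ^ 2 / 2)) := by
    refine (((int1 (n-1)).const_mul (n:ℝ)).sub (int1 (n+1))).congr
      (Filter.Eventually.of_forall fun t => ?_)
    simp [mul_assoc]
  have := integral_eq_zero_of_hasDerivAt_of_integrable hderiv h0 (int1 n)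
  rw [integral_sub (by simpa [mul_assoc] using (int1 (n-1)).const_mul (n:ℝ)) (int1 (n+1))] at this
  have h2 : ∫ t : ℝ, (n:ℝ) * t ^ (n-1) * rexp (-t^2/2)
      = n * ∫ t : ℝ, t ^ (n-1) * rexp (-t^2/2) := by
    rw [← integral_const_mul]; simp [mul_assoc]
  linarith [this, h2.symm ▸ this]




variable {d : ℕ}

noncomputable def ev (p : MvPolynomial (Fin d) ℂ) (v : Fin d → ℝ) : ℂ :=
  eval (fun i => (v i : ℂ)) p

noncomputable def g1 (t : ℝ) : ℂ := Complex.exp ((-t ^ 2 / 2 : ℝ) : ℂ)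

noncomputable def gw (v : Fin d → ℝ) : ℂ := ∏ i, g1 (v i)

lemma g1_eq (t : ℝ) : g1 t = ((rexp (-t ^ 2 / 2) : ℝ) : ℂ) := by
  rw [g1, Complex.ofReal_exp]

lemma ev_monomial (α : Fin d →₀ ℕ) (c : ℂ) (v : Fin d → ℝ) :
    ev (monomial α c) v = c * ∏ i, (v i : ℂ) ^ α i := by
  rw [ev, eval_monomial]
  congr 1
  exact Finsupp.prod_fintype _ _ (fun i => pow_zero _)

lemma mono_fun (α : Fin d →₀ ℕ) (c : ℂ) (v : Fin d → ℝ) :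
    ev (monomial α c) v * gw v = c * ∏ i, ((v i : ℂ) ^ α i * g1 (v i)) := by
  rw [ev_monomial, gw, Finset.prod_mul_distrib]; ring

lemma funeq1 (n : ℕ) : (fun t : ℝ => ((t ^ n * rexp (-t ^ 2 / 2) : ℝ) : ℂ))
    = fun t : ℝ => (t : ℂ) ^ n * g1 t := by
  funext t; rw [g1_eq]; push_cast; ring

lemma int1C (n : ℕ) : Integrable (fun t : ℝ => (t : ℂ) ^ n * g1 t) := by
  rw [← funeq1]; exact (int1 n).ofReal

lemma int1C_eq (n : ℕ) : ∫ t : ℝ, (t : ℂ) ^ n * g1 t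
    = ((∫ t : ℝ, t ^ n * rexp (-t ^ 2 / 2)) : ℝ) := by
  rw [← funeq1]
  exact integral_ofReal

lemma int_mono (α : Fin d →₀ ℕ) (c : ℂ) :
    Integrable (fun v : Fin d → ℝ => ev (monomial α c) v * gw v) := by
  simp_rw [mono_fun]
  exact (Integrable.fintype_prod (f := fun i (t : ℝ) => (t : ℂ) ^ α i * g1 t)
    (fun i => int1C _)).const_mul c

lemma int_poly (p : MvPolynomial (Fin d) ℂ) :
    Integrable (fun v : Fin d → ℝ => ev p v * gw v) := by
  have : ∀ v : Fin d → ℝ, ev p v * gw v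
      = ∑ α ∈ p.support, ev (monomial α (coeff α p)) v * gw v := by
    intro v
    rw [← Finset.sum_mul]
    congr 1
    simp only [ev]
    rw [← map_sum, ← p.as_sum]
  simp_rw [this]
  exact integrable_finset_sum _ (fun α _ => int_mono _ _)

lemma integral_mono_eq (α : Fin d →₀ ℕ) (c : ℂ) :
    ∫ v : Fin d → ℝ, ev (monomial α c) v * gw v
      = c * ∏ i, ((∫ t : ℝ, t ^ α i * rexp (-t ^ 2 / 2) : ℝ) : ℂ) := by
  simp_rw [mono_fun]
  rw [integral_const_mul,
    integral_fintype_prod_volume_eq_prod (f := fun i (t : ℝ) => (t : ℂ) ^ α i * g1 t)]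
  congr 1
  exact Finset.prod_congr rfl fun i _ => int1C_eq _

lemma ibp_mono (i : Fin d) (α : Fin d →₀ ℕ) (c : ℂ) :
    ∫ v : Fin d → ℝ, ev (pderiv i (monomial α c)) v * gw v
      = ∫ v : Fin d → ℝ, ev (X i * monomial α c) v * gw v := by
  rw [pderiv_monomial, X, monomial_mul, integral_mono_eq, integral_mono_eq, one_mul]
  rw [Finset.prod_eq_mul_prod_diff_singleton i _ (fun h => absurd (Finset.mem_univ i) h),
    Finset.prod_eq_mul_prod_diff_singleton i _ (fun h => absurd (Finset.mem_univ i) h)]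
  have h1 : ∀ j ∈ Finset.univ \ {i}, ((α - Finsupp.single i 1 : Fin d →₀ ℕ) j) = α j := by
    intro j hj
    rcases Finset.mem_sdiff.1 hj with ⟨-, hj⟩
    rw [Finsupp.tsub_apply, Finsupp.single_apply, if_neg (fun h => hj (by simp [h]))]
    simp
  have h2 : ∀ j ∈ Finset.univ \ {i}, ((Finsupp.single i 1 + α : Fin d →₀ ℕ) j) = α j := by
    intro j hj
    rcases Finset.mem_sdiff.1 hj with ⟨-, hj⟩
    rw [Finsupp.add_apply, Finsupp.single_apply, if_neg (fun h => hj (by simp [h]))]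
    simp
  have e1 : (∏ j ∈ Finset.univ \ {i},
        ((∫ t : ℝ, t ^ ((α - Finsupp.single i 1 : Fin d →₀ ℕ) j) * rexp (-t ^ 2 / 2) : ℝ) : ℂ))
      = ∏ j ∈ Finset.univ \ {i}, ((∫ t : ℝ, t ^ (α j) * rexp (-t ^ 2 / 2) : ℝ) : ℂ) :=
    Finset.prod_congr rfl (fun j hj => by rw [h1 j hj])
  have e2 : (∏ j ∈ Finset.univ \ {i},
        ((∫ t : ℝ, t ^ ((Finsupp.single i 1 + α : Fin d →₀ ℕ) j) * rexp (-t ^ 2 / 2) : ℝ) : ℂ))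
      = ∏ j ∈ Finset.univ \ {i}, ((∫ t : ℝ, t ^ (α j) * rexp (-t ^ 2 / 2) : ℝ) : ℂ) :=
    Finset.prod_congr rfl (fun j hj => by rw [h2 j hj])
  rw [e1, e2]
  have hai : ((α - Finsupp.single i 1 : Fin d →₀ ℕ) i) = α i - 1 := by
    rw [Finsupp.tsub_apply, Finsupp.single_apply, if_pos rfl]
  have hai2 : ((Finsupp.single i 1 + α : Fin d →₀ ℕ) i) = α i + 1 := by
    rw [Finsupp.add_apply, Finsupp.single_apply, if_pos rfl]
    omega
  rw [hai, hai2, mom (α i)]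
  push_cast
  ring

lemma ibp (i : Fin d) (P : MvPolynomial (Fin d) ℂ) :
    ∫ v : Fin d → ℝ, ev (pderiv i P) v * gw v
      = ∫ v : Fin d → ℝ, ev (X i * P) v * gw v := by
  have hL : ∀ v : Fin d → ℝ, ev (pderiv i P) v * gw v
      = ∑ α ∈ P.support, ev (pderiv i (monomial α (coeff α P))) v * gw v := by
    intro v
    rw [← Finset.sum_mul]
    congr 1
    simp only [ev]
    rw [← map_sum, ← map_sum (pderiv i), ← P.as_sum]
  have hR : ∀ v : Fin d → ℝ, ev (X i * P) v * gw v
      = ∑ α ∈ P.support, ev (X i * monomial α (coeff α P)) v * gw v := by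
    intro v
    rw [← Finset.sum_mul]
    congr 1
    simp only [ev]
    rw [← map_sum, ← Finset.mul_sum, ← P.as_sum]
  simp_rw [hL, hR]
  rw [integral_finset_sum _ (fun α _ => by
      rw [pderiv_monomial]; exact int_mono _ _),
    integral_finset_sum _ (fun α _ => by
      rw [X, monomial_mul]; exact int_mono _ _)]
  exact Finset.sum_congr rfl fun α _ => ibp_mono i α (coeff α P)



variable {d : ℕ}

noncomputable def fact (α : Fin d →₀ ℕ) : ℂ := ((∏ i, Nat.factorial (α i) : ℕ) : ℂ)

noncomputable def Ft (φ ψ : MvPolynomial (Fin d) ℂ) (α : Fin d →₀ ℕ) : ℂ :=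
  fact α * (starRingEnd ℂ) (coeff α φ) * coeff α ψ

noncomputable def Fi (φ ψ : MvPolynomial (Fin d) ℂ) : ℂ := ∑ᶠ α, Ft φ ψ α

lemma Ft_support (φ ψ : MvPolynomial (Fin d) ℂ) :
    Function.support (Ft φ ψ) ⊆ ↑ψ.support := by
  intro α h
  simp only [Function.mem_support, Ft] at h
  simp only [Finset.mem_coe, mem_support_iff]
  intro h0
  exact h (by rw [h0, mul_zero])

lemma Fi_eq_sum (φ ψ : MvPolynomial (Fin d) ℂ) {s : Finset (Fin d →₀ ℕ)}
    (hs : ψ.support ⊆ s) : Fi φ ψ = ∑ α ∈ s, Ft φ ψ α :=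
  finsum_eq_sum_of_support_subset _
    (subset_trans (Ft_support φ ψ) (Finset.coe_subset.2 hs))

lemma Fi_monomial (β γ : Fin d →₀ ℕ) (a b : ℂ) :
    Fi (monomial β a) (monomial γ b)
      = if β = γ then fact γ * (starRingEnd ℂ) a * b else 0 := by
  classical
  rw [Fi_eq_sum _ _ (support_monomial_subset), Finset.sum_singleton]
  rcases eq_or_ne β γ with h | h
  · subst h
    simp [Ft, coeff_monomial]
  · simp [Ft, coeff_monomial, h, Ne.symm h]

lemma Ft_sum_left {ι : Type*} (s : Finset ι) (p : ι → MvPolynomial (Fin d) ℂ)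
    (ψ : MvPolynomial (Fin d) ℂ) (α : Fin d →₀ ℕ) :
    Ft (∑ k ∈ s, p k) ψ α = ∑ k ∈ s, Ft (p k) ψ α := by
  simp only [Ft, coeff_sum, map_sum, Finset.sum_mul, Finset.mul_sum]

lemma Fi_sum_left {ι : Type*} (s : Finset ι) (p : ι → MvPolynomial (Fin d) ℂ)
    (ψ : MvPolynomial (Fin d) ℂ) :
    Fi (∑ k ∈ s, p k) ψ = ∑ k ∈ s, Fi (p k) ψ := by
  rw [Fi_eq_sum _ _ (subset_refl ψ.support)]
  simp_rw [Ft_sum_left]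
  rw [Finset.sum_comm]
  exact Finset.sum_congr rfl fun k _ => (Fi_eq_sum _ _ (subset_refl ψ.support)).symm

lemma Fi_add_right (φ p q : MvPolynomial (Fin d) ℂ) :
    Fi φ (p + q) = Fi φ p + Fi φ q := by
  classical
  have h1 : (p + q).support ⊆ p.support ∪ q.support := support_add
  rw [Fi_eq_sum φ (p + q) (s := p.support ∪ q.support) h1,
    Fi_eq_sum φ p (s := p.support ∪ q.support) Finset.subset_union_left,
    Fi_eq_sum φ q (s := p.support ∪ q.support) Finset.subset_union_right,
    ← Finset.sum_add_distrib]
  refine Finset.sum_congr rfl fun α _ => ?_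
  simp only [Ft, coeff_add]
  ring

lemma Fi_zero_right (φ : MvPolynomial (Fin d) ℂ) : Fi φ 0 = 0 := by
  rw [Fi_eq_sum φ 0 (s := ∅) (by simp)]
  simp

lemma Fi_sum_right {ι : Type*} (s : Finset ι) (φ : MvPolynomial (Fin d) ℂ)
    (q : ι → MvPolynomial (Fin d) ℂ) :
    Fi φ (∑ k ∈ s, q k) = ∑ k ∈ s, Fi φ (q k) := by
  classical
  induction s using Finset.induction_on with
  | empty => simp [Fi_zero_right]
  | insert _ _ h ih => rw [Finset.sum_insert h, Finset.sum_insert h, Fi_add_right, ih]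

lemma Fi_nsmul_right (φ ψ : MvPolynomial (Fin d) ℂ) (n : ℕ) :
    Fi φ (n • ψ) = (n : ℂ) * Fi φ ψ := by
  have hs : (n • ψ).support ⊆ ψ.support := by
    intro α hα
    rw [mem_support_iff] at hα ⊢
    intro h0
    exact hα (by rw [coeff_smul, h0, smul_zero])
  rw [Fi_eq_sum φ (n • ψ) (s := ψ.support) hs, Fi_eq_sum φ ψ (subset_refl _),
    Finset.mul_sum]
  refine Finset.sum_congr rfl fun α _ => ?_
  simp only [Ft, coeff_smul, smul_eq_mul]
  push_cast
  ring

lemma fact_single_add (i : Fin d) (γ : Fin d →₀ ℕ) :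
    fact (Finsupp.single i 1 + γ) = ((γ i : ℂ) + 1) * fact γ := by
  simp only [fact]
  rw [Finset.prod_eq_mul_prod_diff_singleton i _ (fun h => absurd (Finset.mem_univ i) h),
    Finset.prod_eq_mul_prod_diff_singleton i
      (fun j => Nat.factorial (γ j)) (fun h => absurd (Finset.mem_univ i) h)]
  have h1 : ∀ j ∈ Finset.univ \ {i},
      Nat.factorial ((Finsupp.single i 1 + γ : Fin d →₀ ℕ) j) = Nat.factorial (γ j) := by
    intro j hj
    rcases Finset.mem_sdiff.1 hj with ⟨-, hj⟩
    rw [Finsupp.add_apply, Finsupp.single_apply, if_neg (fun h => hj (by simp [h])), zero_add]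
  rw [Finset.prod_congr rfl h1]
  have h2 : (Finsupp.single i 1 + γ : Fin d →₀ ℕ) i = γ i + 1 := by
    rw [Finsupp.add_apply, Finsupp.single_apply, if_pos rfl]; omega
  rw [h2, Nat.factorial_succ]
  push_cast
  ring

/-- Fisher adjoint on monomials. -/
lemma FA_mono (i : Fin d) (β γ : Fin d →₀ ℕ) (a b : ℂ) :
    Fi (pderiv i (monomial β a)) (monomial γ b)
      = Fi (monomial β a) (X i * monomial γ b) := by
  classical
  rw [pderiv_monomial, X, monomial_mul, one_mul, Fi_monomial, Fi_monomial]
  by_cases h : β = Finsupp.single i 1 + γ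
  · subst h
    rw [if_pos (add_tsub_cancel_left _ _), if_pos rfl]
    have h2 : ((Finsupp.single i 1 + γ : Fin d →₀ ℕ) i) = γ i + 1 := by
      rw [Finsupp.add_apply, Finsupp.single_apply, if_pos rfl]; omega
    rw [fact_single_add, h2, map_mul, Complex.conj_natCast]
    push_cast
    ring
  · rw [if_neg h]
    by_cases h2 : (β - Finsupp.single i 1 : Fin d →₀ ℕ) = γ
    · rw [if_pos h2]
      by_cases h3 : β i = 0
      · rw [h3]
        push_cast
        rw [mul_zero, map_zero, mul_zero, zero_mul]
      · exfalso
        apply h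
        rw [← h2, add_comm, tsub_add_cancel_of_le (Finsupp.single_le_iff.2 (by omega))]
    · rw [if_neg h2]

/-- Fisher adjoint. -/
lemma FA (i : Fin d) (φ ψ : MvPolynomial (Fin d) ℂ) :
    Fi (pderiv i φ) ψ = Fi φ (X i * ψ) := by
  conv_lhs => rw [φ.as_sum, map_sum (pderiv i)]
  rw [Fi_sum_left]
  conv_rhs => rw [φ.as_sum]
  rw [Fi_sum_left]
  have L : ∀ β, Fi (pderiv i (monomial β (coeff β φ))) ψ
      = ∑ γ ∈ ψ.support, Fi (pderiv i (monomial β (coeff β φ))) (monomial γ (coeff γ ψ)) := by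
    intro β
    conv_lhs => rw [ψ.as_sum]
    rw [Fi_sum_right]
  have R : ∀ β, Fi (monomial β (coeff β φ)) (X i * ψ)
      = ∑ γ ∈ ψ.support, Fi (monomial β (coeff β φ)) (X i * monomial γ (coeff γ ψ)) := by
    intro β
    conv_lhs => rw [ψ.as_sum, Finset.mul_sum]
    rw [Fi_sum_right]
  rw [Finset.sum_congr rfl (fun β _ => L β), Finset.sum_congr rfl (fun β _ => R β)]
  refine Finset.sum_congr rfl fun β _ => Finset.sum_congr rfl fun γ _ => ?_
  exact FA_mono i β γ _ _

lemma degree_eq (f : Fin d →₀ ℕ) : f.degree = ∑ i, f i :=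
  Finset.sum_subset (Finset.subset_univ _) (fun i _ hi => Finsupp.notMem_support_iff.1 hi)

/-- Euler identity on monomials. -/
lemma euler_mono (α : Fin d →₀ ℕ) (c : ℂ) (i : Fin d) :
    X i * pderiv i (monomial α c) = (α i) • monomial α c := by
  rw [pderiv_monomial, X, monomial_mul, one_mul]
  by_cases h : α i = 0
  · rw [h]
    push_cast
    rw [mul_zero, zero_smul]
    exact monomial_zero
  · have he : (Finsupp.single i 1 + (α - Finsupp.single i 1) : Fin d →₀ ℕ) = α := by
      rw [add_comm, tsub_add_cancel_of_le (Finsupp.single_le_iff.2 (by omega))]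
    rw [he, smul_monomial]
    congr 1
    rw [nsmul_eq_mul]
    ring

/-- Euler identity for homogeneous polynomials. -/
lemma euler {n : ℕ} {ψ : MvPolynomial (Fin d) ℂ} (hψ : IsHomogeneous ψ n) :
    ∑ i, X i * pderiv i ψ = n • ψ := by
  conv_lhs => rw [ψ.as_sum]
  have : ∀ i : Fin d, X i * pderiv i (∑ α ∈ ψ.support, monomial α (coeff α ψ))
      = ∑ α ∈ ψ.support, (α i) • monomial α (coeff α ψ) := by
    intro i
    rw [map_sum (pderiv i), Finset.mul_sum]
    exact Finset.sum_congr rfl fun α _ => euler_mono α _ i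
  rw [Finset.sum_congr rfl fun i _ => this i, Finset.sum_comm]
  conv_rhs => rw [ψ.as_sum, Finset.smul_sum]
  refine Finset.sum_congr rfl fun α hα => ?_
  rw [← Finset.sum_smul]
  congr 1
  rw [← degree_eq, Finsupp.degree_eq_weight_one]
  exact hψ (mem_support_iff.1 hα)


noncomputable def Gp (φ ψ : MvPolynomial (Fin d) ℂ) : ℂ :=
  ∫ v : Fin d → ℝ, (starRingEnd ℂ) (ev φ v) * ev ψ v * gw v

lemma ev_conj (φ : MvPolynomial (Fin d) ℂ) (v : Fin d → ℝ) :
    (starRingEnd ℂ) (ev φ v) = ev (map (starRingEnd ℂ) φ) v := by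
  rw [ev, ev, eval_map]
  have h := eval₂_comp_left (starRingEnd ℂ) (RingHom.id ℂ) (fun i => ((v i : ℝ) : ℂ)) φ
  rw [eval₂_id] at h
  rw [h]
  congr 1
  funext i
  simp [Complex.conj_ofReal]

lemma Gp_eq (φ ψ : MvPolynomial (Fin d) ℂ) :
    Gp φ ψ = ∫ v : Fin d → ℝ, ev (map (starRingEnd ℂ) φ * ψ) v * gw v := by
  rw [Gp]
  congr 1
  funext v
  rw [ev_conj]
  simp only [ev, map_mul]

lemma Gp_int (φ ψ : MvPolynomial (Fin d) ℂ) :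
    Integrable (fun v : Fin d → ℝ => (starRingEnd ℂ) (ev φ v) * ev ψ v * gw v) := by
  have : (fun v : Fin d → ℝ => (starRingEnd ℂ) (ev φ v) * ev ψ v * gw v)
      = fun v => ev (map (starRingEnd ℂ) φ * ψ) v * gw v := by
    funext v
    rw [ev_conj]
    simp only [ev, map_mul]
  rw [this]
  exact int_poly _

lemma Gp_add_right (φ p q : MvPolynomial (Fin d) ℂ) :
    Gp φ (p + q) = Gp φ p + Gp φ q := by
  rw [Gp, Gp, Gp, ← integral_add (Gp_int φ p) (Gp_int φ q)]
  congr 1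
  funext v
  simp only [ev, map_add]
  ring

lemma Gp_zero_right (φ : MvPolynomial (Fin d) ℂ) : Gp φ 0 = 0 := by
  rw [Gp]
  simp [ev]

lemma Gp_sum_right {ι : Type*} (s : Finset ι) (φ : MvPolynomial (Fin d) ℂ)
    (q : ι → MvPolynomial (Fin d) ℂ) :
    Gp φ (∑ k ∈ s, q k) = ∑ k ∈ s, Gp φ (q k) := by
  classical
  induction s using Finset.induction_on with
  | empty => simp [Gp_zero_right]
  | insert _ _ h ih => rw [Finset.sum_insert h, Finset.sum_insert h, Gp_add_right, ih]

lemma Gp_sum_left {ι : Type*} (s : Finset ι) (p : ι → MvPolynomial (Fin d) ℂ)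
    (ψ : MvPolynomial (Fin d) ℂ) :
    Gp (∑ k ∈ s, p k) ψ = ∑ k ∈ s, Gp (p k) ψ := by
  classical
  induction s using Finset.induction_on with
  | empty => simp [Gp]; simp [ev]
  | insert _ _ h ih =>
      rw [Finset.sum_insert h, Finset.sum_insert h, ← ih, Gp, Gp, Gp,
        ← integral_add (Gp_int _ _) (Gp_int _ _)]
      congr 1
      funext v
      simp only [ev, map_add]
      ring

lemma Gp_nsmul_right (φ ψ : MvPolynomial (Fin d) ℂ) (n : ℕ) :
    Gp φ (n • ψ) = (n : ℂ) * Gp φ ψ := by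
  rw [Gp, Gp, ← integral_const_mul]
  congr 1
  funext v
  simp only [ev, nsmul_eq_mul, map_mul, map_natCast]
  ring

lemma Gp_nsmul_left (φ ψ : MvPolynomial (Fin d) ℂ) (n : ℕ) :
    Gp (n • φ) ψ = (n : ℂ) * Gp φ ψ := by
  rw [Gp, Gp, ← integral_const_mul]
  congr 1
  funext v
  simp only [ev, nsmul_eq_mul, map_mul, map_natCast, Complex.conj_natCast]
  ring

/-- Gaussian integration by parts for the pairing. -/
lemma GIBP (i : Fin d) (φ ψ : MvPolynomial (Fin d) ℂ) :
    Gp (pderiv i φ) ψ + Gp φ (pderiv i ψ) = Gp φ (X i * ψ) := by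
  rw [Gp_eq, Gp_eq, Gp_eq, ← integral_add (int_poly _) (int_poly _)]
  have h1 : (fun v : Fin d → ℝ => ev (map (starRingEnd ℂ) (pderiv i φ) * ψ) v * gw v
        + ev (map (starRingEnd ℂ) φ * pderiv i ψ) v * gw v)
      = fun v => ev (pderiv i (map (starRingEnd ℂ) φ * ψ)) v * gw v := by
    funext v
    rw [pderiv_mul, pderiv_map]
    simp only [ev, map_add]
    ring
  rw [h1, ibp]
  have h2 : X i * (map (starRingEnd ℂ) φ * ψ) = map (starRingEnd ℂ) φ * (X i * ψ) := by ring
  rw [h2]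

lemma GX (i : Fin d) (φ ψ : MvPolynomial (Fin d) ℂ) :
    Gp (X i * φ) ψ = Gp φ (X i * ψ) := by
  rw [Gp_eq, Gp_eq]
  congr 1
  funext v
  congr 2
  rw [map_mul, map_X]
  ring


lemma coeff_pderiv (i : Fin d) (p : MvPolynomial (Fin d) ℂ) (α : Fin d →₀ ℕ) :
    coeff α (pderiv i p) = ((α i : ℂ) + 1) * coeff (α + Finsupp.single i 1) p := by
  classical
  induction p using MvPolynomial.induction_on' with
  | monomial β c =>
      rw [pderiv_monomial, coeff_monomial, coeff_monomial]
      by_cases h : β = α + Finsupp.single i 1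
      · subst h
        rw [if_pos (add_tsub_cancel_right _ _), if_pos rfl]
        have : (α + Finsupp.single i 1 : Fin d →₀ ℕ) i = α i + 1 := by
          rw [Finsupp.add_apply, Finsupp.single_apply, if_pos rfl]
        rw [this]
        push_cast
        ring
      · rw [if_neg h]
        by_cases h2 : (β - Finsupp.single i 1 : Fin d →₀ ℕ) = α
        · rw [if_pos h2]
          by_cases h3 : β i = 0
          · rw [h3]
            push_cast
            rw [mul_zero, mul_zero]
          · exfalso
            apply h
            rw [← h2, tsub_add_cancel_of_le (Finsupp.single_le_iff.2 (by omega))]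
        · rw [if_neg h2, mul_zero]
  | add p q hp hq =>
      rw [map_add, coeff_add, coeff_add, hp, hq]
      ring

lemma pderiv_comm (i j : Fin d) (p : MvPolynomial (Fin d) ℂ) :
    pderiv i (pderiv j p) = pderiv j (pderiv i p) := by
  apply MvPolynomial.ext
  intro α
  rw [coeff_pderiv, coeff_pderiv, coeff_pderiv, coeff_pderiv]
  have hcomm : (α + Finsupp.single i 1 + Finsupp.single j 1 : Fin d →₀ ℕ)
      = α + Finsupp.single j 1 + Finsupp.single i 1 := by
    rw [add_assoc, add_assoc, add_comm (Finsupp.single i 1)]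
  rw [hcomm]
  by_cases h : i = j
  · subst h; ring
  · have h1 : (α + Finsupp.single j 1 : Fin d →₀ ℕ) i = α i := by
      rw [Finsupp.add_apply, Finsupp.single_apply, if_neg (Ne.symm h), add_zero]
    have h2 : (α + Finsupp.single i 1 : Fin d →₀ ℕ) j = α j := by
      rw [Finsupp.add_apply, Finsupp.single_apply, if_neg h, add_zero]
    rw [h1, h2]
    ring

lemma isHomog_coeff {p : MvPolynomial (Fin d) ℂ} {n : ℕ} (hp : IsHomogeneous p n)
    {α : Fin d →₀ ℕ} (h : coeff α p ≠ 0) : α.degree = n := by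
  rw [Finsupp.degree_eq_weight_one]
  exact hp h

lemma isHomog_of_coeff {p : MvPolynomial (Fin d) ℂ} {n : ℕ}
    (h : ∀ α : Fin d →₀ ℕ, coeff α p ≠ 0 → α.degree = n) : IsHomogeneous p n := by
  intro α hα
  have := h α hα
  rwa [Finsupp.degree_eq_weight_one] at this

lemma pderiv_homog {p : MvPolynomial (Fin d) ℂ} {n : ℕ} (hp : IsHomogeneous p (n + 1))
    (i : Fin d) : IsHomogeneous (pderiv i p) n := by
  apply isHomog_of_coeff
  intro α hα
  rw [coeff_pderiv] at hα
  have h2 : coeff (α + Finsupp.single i 1) p ≠ 0 := by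
    intro h0; exact hα (by rw [h0, mul_zero])
  have h3 := isHomog_coeff hp h2
  rw [degree_eq] at h3 ⊢
  have h4 : ∑ j, (α + Finsupp.single i 1 : Fin d →₀ ℕ) j = (∑ j, α j) + 1 := by
    simp only [Finsupp.add_apply]
    rw [Finset.sum_add_distrib]
    congr 1
    rw [Finset.sum_eq_single i (fun j _ hj => by
        rw [Finsupp.single_apply, if_neg (fun hh => hj hh.symm)])
      (fun hh => absurd (Finset.mem_univ i) hh)]
    rw [Finsupp.single_apply, if_pos rfl]
  omega

lemma harm_pderiv {p : MvPolynomial (Fin d) ℂ}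
    (hp : ∑ j, pderiv j (pderiv j p) = 0) (i : Fin d) :
    ∑ j, pderiv j (pderiv j (pderiv i p)) = 0 := by
  have : ∀ j : Fin d, pderiv j (pderiv j (pderiv i p))
      = pderiv i (pderiv j (pderiv j p)) := by
    intro j
    rw [pderiv_comm j i p, pderiv_comm j i]
  rw [Finset.sum_congr rfl fun j _ => this j, ← map_sum (pderiv i), hp, map_zero]

lemma homog0 {p : MvPolynomial (Fin d) ℂ} (hp : IsHomogeneous p 0) :
    p = C (coeff 0 p) := by
  apply MvPolynomial.ext
  intro α
  rw [coeff_C]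
  by_cases h : (0 : Fin d →₀ ℕ) = α
  · rw [if_pos h, ← h]
  · rw [if_neg h]
    by_contra h0
    have := isHomog_coeff hp h0
    rw [Finsupp.degree_eq_zero_iff] at this
    exact h this.symm

/-- key identity, Gaussian side, right slot. -/
lemma keyG_right {n : ℕ} (φ ψ : MvPolynomial (Fin d) ℂ) (hψ : IsHomogeneous ψ n)
    (hharm : ∑ i, pderiv i (pderiv i ψ) = 0) :
    (n : ℂ) * Gp φ ψ = ∑ i, Gp (pderiv i φ) (pderiv i ψ) := by
  have h1 : (n : ℂ) * Gp φ ψ = Gp φ (n • ψ) := (Gp_nsmul_right φ ψ n).symm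
  rw [h1, ← euler hψ, Gp_sum_right]
  have h2 : ∀ i : Fin d, Gp φ (X i * pderiv i ψ)
      = Gp (pderiv i φ) (pderiv i ψ) + Gp φ (pderiv i (pderiv i ψ)) := fun i =>
    (GIBP i φ (pderiv i ψ)).symm
  rw [Finset.sum_congr rfl fun i _ => h2 i, Finset.sum_add_distrib,
    ← Gp_sum_right, hharm, Gp_zero_right, add_zero]

/-- key identity, Gaussian side, left slot. -/
lemma keyG_left {m : ℕ} (φ ψ : MvPolynomial (Fin d) ℂ) (hφ : IsHomogeneous φ m)
    (hharm : ∑ i, pderiv i (pderiv i φ) = 0) :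
    (m : ℂ) * Gp φ ψ = ∑ i, Gp (pderiv i φ) (pderiv i ψ) := by
  have h1 : (m : ℂ) * Gp φ ψ = Gp (m • φ) ψ := (Gp_nsmul_left φ ψ m).symm
  rw [h1, ← euler hφ, Gp_sum_left]
  have h2 : ∀ i : Fin d, Gp (X i * pderiv i φ) ψ
      = Gp (pderiv i (pderiv i φ)) ψ + Gp (pderiv i φ) (pderiv i ψ) := by
    intro i
    rw [GX i (pderiv i φ) ψ, ← GIBP i (pderiv i φ) ψ]
  rw [Finset.sum_congr rfl fun i _ => h2 i, Finset.sum_add_distrib,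
    ← Gp_sum_left, hharm]
  have : Gp (0 : MvPolynomial (Fin d) ℂ) ψ = 0 := by
    have := Gp_sum_left (∅ : Finset ℕ) (fun _ => (0:MvPolynomial (Fin d) ℂ)) ψ
    simpa using this
  rw [this, zero_add]

/-- key identity, Fisher side. -/
lemma keyF_right {n : ℕ} (φ ψ : MvPolynomial (Fin d) ℂ) (hψ : IsHomogeneous ψ n) :
    (n : ℂ) * Fi φ ψ = ∑ i, Fi (pderiv i φ) (pderiv i ψ) := by
  rw [← Fi_nsmul_right, ← euler hψ, Fi_sum_right]
  exact (Finset.sum_congr rfl fun i _ => (FA i φ (pderiv i ψ))).symm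

lemma Gp_offdiag {m n : ℕ} (φ ψ : MvPolynomial (Fin d) ℂ)
    (hφ : IsHomogeneous φ m) (hψ : IsHomogeneous ψ n)
    (hφh : ∑ i, pderiv i (pderiv i φ) = 0) (hψh : ∑ i, pderiv i (pderiv i ψ) = 0)
    (hmn : m ≠ n) : Gp φ ψ = 0 := by
  have h1 := keyG_left φ ψ hφ hφh
  have h2 := keyG_right φ ψ hψ hψh
  have h3 : ((m : ℂ) - n) * Gp φ ψ = 0 := by
    rw [sub_mul, h1, h2, sub_self]
  rcases mul_eq_zero.1 h3 with h | h
  · exact absurd (by exact_mod_cast sub_eq_zero.1 h) hmn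
  · exact h

lemma Fi_offdiag {m n : ℕ} (φ ψ : MvPolynomial (Fin d) ℂ)
    (hφ : IsHomogeneous φ m) (hψ : IsHomogeneous ψ n)
    (hmn : m ≠ n) : Fi φ ψ = 0 := by
  unfold Fi
  apply finsum_eq_zero_of_forall_eq_zero
  intro α
  unfold Ft
  by_cases h1 : coeff α ψ = 0
  · rw [h1, mul_zero]
  · have h2 : α.degree = n := isHomog_coeff hψ h1
    have h3 : coeff α φ = 0 := by
      by_contra h0
      exact hmn ((isHomog_coeff hφ h0).symm.trans h2)
    rw [h3, map_zero, mul_zero, zero_mul]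


lemma degree_add_single (α : Fin d →₀ ℕ) (i : Fin d) :
    (α + Finsupp.single i 1 : Fin d →₀ ℕ).degree = α.degree + 1 := by
  rw [degree_eq, degree_eq]
  simp only [Finsupp.add_apply]
  rw [Finset.sum_add_distrib]
  congr 1
  rw [Finset.sum_eq_single i (fun j _ hj => by
      rw [Finsupp.single_apply, if_neg (fun hh => hj hh.symm)])
    (fun hh => absurd (Finset.mem_univ i) hh)]
  rw [Finsupp.single_apply, if_pos rfl]
noncomputable def CC (d : ℕ) : ℂ := (((2 * π) ^ ((d : ℝ) / 2) : ℝ) : ℂ)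

lemma int_g1 : ∫ t : ℝ, g1 t = ((√(2 * π) : ℝ) : ℂ) := by
  have h1 : ∫ t : ℝ, g1 t = ((∫ t : ℝ, rexp (-t ^ 2 / 2)) : ℝ) := by
    simp_rw [g1_eq]
    exact integral_ofReal
  rw [h1]
  have h2 : ∫ t : ℝ, rexp (-t ^ 2 / 2) = √(2 * π) := by
    have h3 : ∀ t : ℝ, -t ^ 2 / 2 = -((1:ℝ)/2) * t ^ 2 := fun t => by ring
    simp_rw [h3]
    rw [integral_gaussian]
    norm_num
    ring
  rw [h2]

lemma int_gw : ∫ v : Fin d → ℝ, gw v = CC d := by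
  simp only [gw]
  rw [integral_fintype_prod_volume_eq_prod (f := fun _ (t : ℝ) => g1 t)]
  rw [int_g1, Finset.prod_const, Finset.card_univ, Fintype.card_fin]
  rw [CC, ← Complex.ofReal_pow]
  congr 1
  rw [Real.sqrt_eq_rpow, ← Real.rpow_natCast ((2*π) ^ ((1:ℝ)/2)) d,
    ← Real.rpow_mul (by positivity)]
  congr 1
  ring

lemma Gp_CC (a b : ℂ) :
    Gp (C a : MvPolynomial (Fin d) ℂ) (C b) = (starRingEnd ℂ) a * b * CC d := by
  rw [Gp]
  simp only [ev, eval_C]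
  rw [← int_gw, ← integral_const_mul]

lemma Fi_CC (a b : ℂ) :
    Fi (C a : MvPolynomial (Fin d) ℂ) (C b) = (starRingEnd ℂ) a * b := by
  rw [C_apply, C_apply, Fi_monomial, if_pos rfl]
  have : fact (0 : Fin d →₀ ℕ) = 1 := by
    simp [fact]
  rw [this, one_mul]

lemma main_homog : ∀ (n m : ℕ) (φ ψ : MvPolynomial (Fin d) ℂ),
    IsHomogeneous φ m → IsHomogeneous ψ n →
    (∑ i, pderiv i (pderiv i φ)) = 0 → (∑ i, pderiv i (pderiv i ψ)) = 0 →
    Gp φ ψ = CC d * Fi φ ψ := by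
  intro n
  induction n with
  | zero =>
    intro m φ ψ hφ hψ hφh hψh
    by_cases hm : m = 0
    · subst hm
      rw [homog0 hφ, homog0 hψ, Gp_CC, Fi_CC]
      ring
    · rw [Gp_offdiag φ ψ hφ hψ hφh hψh hm, Fi_offdiag φ ψ hφ hψ hm, mul_zero]
  | succ k ih =>
    intro m φ ψ hφ hψ hφh hψh
    by_cases hm : m = k + 1
    · subst hm
      have hG := keyG_right φ ψ hψ hψh
      have hF := keyF_right φ ψ hψ
      have hsum : ∑ i, Gp (pderiv i φ) (pderiv i ψ)
          = CC d * ∑ i, Fi (pderiv i φ) (pderiv i ψ) := by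
        rw [Finset.mul_sum]
        refine Finset.sum_congr rfl fun i _ => ?_
        exact ih k (pderiv i φ) (pderiv i ψ) (pderiv_homog hφ i) (pderiv_homog hψ i)
          (harm_pderiv hφh i) (harm_pderiv hψh i)
      have hkey : ((k + 1 : ℕ) : ℂ) * Gp φ ψ = ((k + 1 : ℕ) : ℂ) * (CC d * Fi φ ψ) := by
        rw [hG, hsum, ← hF]
        ring
      exact mul_left_cancel₀ (by exact_mod_cast Nat.succ_ne_zero k) hkey
    · rw [Gp_offdiag φ ψ hφ hψ hφh hψh hm, Fi_offdiag φ ψ hφ hψ hm, mul_zero]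

lemma pderiv_hc (i : Fin d) (p : MvPolynomial (Fin d) ℂ) (j : ℕ) :
    pderiv i (homogeneousComponent (j + 1) p) = homogeneousComponent j (pderiv i p) := by
  apply MvPolynomial.ext
  intro α
  rw [coeff_pderiv, coeff_homogeneousComponent, coeff_homogeneousComponent, coeff_pderiv]
  have hdeg := degree_add_single α i
  by_cases h : α.degree = j
  · rw [if_pos (by omega), if_pos h]
  · rw [if_neg (by omega), if_neg h, mul_zero]

lemma harm_hc {p : MvPolynomial (Fin d) ℂ} (hp : ∑ i, pderiv i (pderiv i p) = 0) (j : ℕ) :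
    ∑ i, pderiv i (pderiv i (homogeneousComponent j p)) = 0 := by
  match j with
  | 0 =>
    rw [homogeneousComponent_zero]
    simp [pderiv_C]
  | 1 =>
    have h1 : ∀ i : Fin d, pderiv i (pderiv i (homogeneousComponent 1 p)) = 0 := by
      intro i
      rw [pderiv_hc i p 0, homogeneousComponent_zero, pderiv_C]
    rw [Finset.sum_congr rfl fun i _ => h1 i, Finset.sum_const, smul_zero]
  | (k + 2) =>
    have h1 : ∀ i : Fin d, pderiv i (pderiv i (homogeneousComponent (k + 2) p))
        = homogeneousComponent k (pderiv i (pderiv i p)) := by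
      intro i
      rw [pderiv_hc i p (k + 1), pderiv_hc i _ k]
    rw [Finset.sum_congr rfl fun i _ => h1 i, ← map_sum (homogeneousComponent k), hp,
      map_zero]

lemma main (φ ψ : MvPolynomial (Fin d) ℂ)
    (hφ : ∑ i, pderiv i (pderiv i φ) = 0) (hψ : ∑ i, pderiv i (pderiv i ψ) = 0) :
    Gp φ ψ = CC d * Fi φ ψ := by
  conv_lhs => rw [← sum_homogeneousComponent φ]
  conv_rhs => rw [← sum_homogeneousComponent φ]
  rw [Gp_sum_left, Fi_sum_left, Finset.mul_sum]
  refine Finset.sum_congr rfl fun j _ => ?_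
  conv_lhs => rw [← sum_homogeneousComponent ψ]
  conv_rhs => rw [← sum_homogeneousComponent ψ]
  rw [Gp_sum_right, Fi_sum_right, Finset.mul_sum]
  refine Finset.sum_congr rfl fun k _ => ?_
  exact main_homog k j (homogeneousComponent j φ) (homogeneousComponent k ψ)
    (homogeneousComponent_isHomogeneous j φ) (homogeneousComponent_isHomogeneous k ψ)
    (harm_hc hφ j) (harm_hc hψ k)

lemma gw_eq (v : Fin d → ℝ) :
    Complex.exp ((-(∑ i, (v i) ^ 2) / 2 : ℝ) : ℂ) = gw v := by
  rw [gw]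
  simp only [g1]
  rw [← Complex.exp_sum]
  congr 1
  rw [← Complex.ofReal_sum]
  congr 1
  rw [← Finset.sum_div, ← Finset.sum_neg_distrib]

lemma transfer (φ ψ : MvPolynomial (Fin d) ℂ) :
    (∫ x : EuclideanSpace ℝ (Fin d),
        (starRingEnd ℂ) (eval (fun i => (x i : ℂ)) φ) * eval (fun i => (x i : ℂ)) ψ *
          Complex.exp ((-(‖x‖ ^ 2) / 2 : ℝ) : ℂ)) = Gp φ ψ := by
  have h := (EuclideanSpace.volume_preserving_symm_measurableEquiv_toLp (Fin d)).symm
  rw [← h.integral_comp (MeasurableEquiv.measurableEmbedding _)]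
  rw [Gp]
  congr 1
  funext v
  have hnorm : ‖(MeasurableEquiv.toLp 2 (Fin d → ℝ)).symm.symm v‖ ^ 2 = ∑ i, (v i) ^ 2 := by
    rw [EuclideanSpace.norm_eq, Real.sq_sqrt (by positivity)]
    refine Finset.sum_congr rfl fun i _ => ?_
    rw [Real.norm_eq_abs, sq_abs]
    rfl
  rw [hnorm, gw_eq]
  rfl


end FG

open Real MeasureTheory MvPolynomial

/-- The Fisher inner product of two harmonic polynomials on `ℝ^d` equals their
Gaussian-weighted `L²` inner product, up to the normalization `(2π)^{d/2}`; moreover the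
defining sum of the Fisher inner product has finitely many nonzero terms. -/
theorem fisher_eq_gaussian_inner_of_harmonic (d : ℕ) (hd : 1 ≤ d)
    (φ ψ : MvPolynomial (Fin d) ℂ)
    (hφ : ∑ i : Fin d, pderiv i (pderiv i φ) = 0)
    (hψ : ∑ i : Fin d, pderiv i (pderiv i ψ) = 0) :
    (Function.support fun α : Fin d →₀ ℕ =>
        ((∏ i : Fin d, Nat.factorial (α i) : ℕ) : ℂ) *
          (starRingEnd ℂ) (coeff α φ) * coeff α ψ).Finite ∧
    ∑ᶠ α : Fin d →₀ ℕ,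
        ((∏ i : Fin d, Nat.factorial (α i) : ℕ) : ℂ) *
          (starRingEnd ℂ) (coeff α φ) * coeff α ψ =
      (((2 * π) ^ (-(d : ℝ) / 2) : ℝ) : ℂ) *
        ∫ x : EuclideanSpace ℝ (Fin d),
          (starRingEnd ℂ) (eval (fun i => (x i : ℂ)) φ) *
            eval (fun i => (x i : ℂ)) ψ *
            Complex.exp ((-(‖x‖ ^ 2) / 2 : ℝ) : ℂ) := by
  constructor
  · exact Set.Finite.subset ψ.support.finite_toSet (FG.Ft_support φ ψ)
  · have hmain := FG.main φ ψ hφ hψ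
    have htrans := FG.transfer φ ψ
    have hconst : (((2 * π) ^ (-(d : ℝ) / 2) : ℝ) : ℂ) * FG.CC d = 1 := by
      rw [FG.CC, ← Complex.ofReal_mul, ← Real.rpow_add (by positivity)]
      rw [show -(d:ℝ)/2 + (d:ℝ)/2 = 0 by ring, Real.rpow_zero, Complex.ofReal_one]
    have : FG.Fi φ ψ = (((2 * π) ^ (-(d : ℝ) / 2) : ℝ) : ℂ) *
        ∫ x : EuclideanSpace ℝ (Fin d),
          (starRingEnd ℂ) (eval (fun i => (x i : ℂ)) φ) *
            eval (fun i => (x i : ℂ)) ψ *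
            Complex.exp ((-(‖x‖ ^ 2) / 2 : ℝ) : ℂ) := by
      rw [htrans, hmain, ← mul_assoc, hconst, one_mul]
    exact this
end

section
/- Let d ≥ 3 and k ∈ ℕ. Let H_k be the ℂ-subspace of MvPolynomial (Fin d) ℂ consisting of polynomials p that are homogeneous of degree k and harmonic (∑_i pderiv i (pderiv i p) = 0). Then H_k is finite-dimensional and its dimension satisfies (dim_ℂ H_k) · ((d-2)! · k!) = (d + 2k - 2) · (d + k - 3)!. -/
open MvPolynomial

/- ### Auxiliary lemmas on `Finsupp.degree` -/

lemma degree_add' {σ : Type*} (f g : σ →₀ ℕ) : (f + g).degree = f.degree + g.degree := by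
  simp [Finsupp.degree_eq_weight_one, map_add]

lemma degree_single' {σ : Type*} (i : σ) (m : ℕ) : (Finsupp.single i m).degree = m := by
  rcases eq_or_ne m 0 with h | h
  · simp [h, map_zero]
  · rw [Finsupp.degree_apply, Finsupp.support_single_ne_zero _ h]; simp

lemma sub_single_add {σ : Type*} [DecidableEq σ] (f : σ →₀ ℕ) (i : σ) (n : ℕ) (h : n ≤ f i) :
    (f - Finsupp.single i n) + Finsupp.single i n = f := by
  ext j
  rcases eq_or_ne j i with rfl | hj
  · simp [Nat.sub_add_cancel h]
  · simp [Finsupp.single_apply, Ne.symm hj]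

lemma degree_eq_sum_univ {d : ℕ} (f : Fin d →₀ ℕ) : f.degree = ∑ j : Fin d, f j := by
  rw [Finsupp.degree_apply]
  exact Finset.sum_subset (Finset.subset_univ _) (fun x _ hx => Finsupp.notMem_support_iff.1 hx)

/- ### Dimension of the space of homogeneous polynomials -/

lemma card_toMultiset_deg (d : ℕ) (f : Fin d →₀ ℕ) :
    Multiset.card (Finsupp.toMultiset f) = f.degree := by
  rw [Finsupp.card_toMultiset]; rfl

noncomputable def degEquiv (d n : ℕ) :
    {α : Fin d →₀ ℕ // α.degree = n} ≃ Sym (Fin d) n where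
  toFun α := ⟨Finsupp.toMultiset α.1, by rw [card_toMultiset_deg]; exact α.2⟩
  invFun m := ⟨Multiset.toFinsupp m.1, by
    rw [← card_toMultiset_deg, Multiset.toFinsupp_toMultiset]; exact m.2⟩
  left_inv α := by ext : 1; simp
  right_inv m := by ext : 1; simp

noncomputable instance (d n : ℕ) : Fintype {α : Fin d →₀ ℕ // α.degree = n} :=
  Fintype.ofEquiv _ (degEquiv d n).symm

lemma card_deg (d n : ℕ) : Fintype.card {α : Fin d →₀ ℕ // α.degree = n} = (d + n - 1).choose n := by
  rw [Fintype.card_congr (degEquiv d n), Sym.card_sym_eq_choose, Fintype.card_fin]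

noncomputable def homogEquiv (d n : ℕ) :
    (homogeneousSubmodule (Fin d) ℂ n) ≃ₗ[ℂ] ({α : Fin d →₀ ℕ // α.degree = n} →₀ ℂ) :=
  (LinearEquiv.ofEq _ _ (homogeneousSubmodule_eq_finsupp_supported (Fin d) ℂ n)).trans
    (AddMonoidAlgebra.supportedEquivFinsupp _)

instance homogFinite (d n : ℕ) : FiniteDimensional ℂ (homogeneousSubmodule (Fin d) ℂ n) :=
  Module.Finite.equiv (homogEquiv d n).symm

lemma finrank_homog (d n : ℕ) :
    Module.finrank ℂ (homogeneousSubmodule (Fin d) ℂ n) = (d + n - 1).choose n := by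
  rw [LinearEquiv.finrank_eq (homogEquiv d n), Module.finrank_finsupp, Module.finrank_self,
    mul_one, card_deg]

/- ### Homogeneity of partial derivatives -/

lemma pderiv_isHomog {d n : ℕ} {p : MvPolynomial (Fin d) ℂ} (h : p.IsHomogeneous n)
    (i : Fin d) : (pderiv i p).IsHomogeneous (n - 1) := by
  rw [← support_sum_monomial_coeff p, map_sum]
  apply IsHomogeneous.sum
  intro α hα
  rw [pderiv_monomial]
  rcases eq_or_ne (α i) 0 with h0 | h0
  · rw [h0]; simp only [Nat.cast_zero, mul_zero, map_zero]; exact isHomogeneous_zero _ _ _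
  · apply isHomogeneous_monomial
    have hdeg : α.degree = n := by
      rw [Finsupp.degree_eq_weight_one]; exact h (mem_support_iff.1 hα)
    have h1 : (α - Finsupp.single i 1) + Finsupp.single i 1 = α :=
      sub_single_add α i 1 (Nat.one_le_iff_ne_zero.2 h0)
    have := congrArg Finsupp.degree h1
    rw [degree_add', degree_single', hdeg] at this
    omega

lemma pderiv_eq_zero_of_homog_zero {d : ℕ} {p : MvPolynomial (Fin d) ℂ}
    (h : p.IsHomogeneous 0) (i : Fin d) : pderiv i p = 0 := by
  rw [← support_sum_monomial_coeff p, map_sum]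
  apply Finset.sum_eq_zero
  intro α hα
  have hdeg : α.degree = 0 := by
    rw [Finsupp.degree_eq_weight_one]; exact h (mem_support_iff.1 hα)
  rw [Finsupp.degree_eq_zero_iff] at hdeg
  subst hdeg
  simp [pderiv_monomial]

/- ### The formal Laplacian -/

noncomputable def Lap (d : ℕ) : MvPolynomial (Fin d) ℂ →ₗ[ℂ] MvPolynomial (Fin d) ℂ :=
  ∑ i : Fin d, ((pderiv (R := ℂ) i).toLinearMap ∘ₗ (pderiv (R := ℂ) i).toLinearMap)

lemma Lap_apply {d : ℕ} (p : MvPolynomial (Fin d) ℂ) :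
    Lap d p = ∑ i : Fin d, pderiv i (pderiv i p) := by
  simp [Lap, LinearMap.sum_apply]

lemma Lap_monomial {d : ℕ} (β : Fin d →₀ ℕ) (c : ℂ) :
    Lap d (monomial β c) =
      ∑ i : Fin d, monomial (β - Finsupp.single i 2) (c * (β i) * ((β i - 1 : ℕ))) := by
  rw [Lap_apply]
  refine Finset.sum_congr rfl fun i _ => ?_
  rw [pderiv_monomial, pderiv_monomial]
  congr 1
  · rw [tsub_tsub, ← Finsupp.single_add]
  · rw [Finsupp.tsub_apply, Finsupp.single_eq_same, mul_assoc]

lemma Lap_isHomog {d n : ℕ} {p : MvPolynomial (Fin d) ℂ} (h : p.IsHomogeneous n) :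
    (Lap d p).IsHomogeneous (n - 2) := by
  rw [Lap_apply]
  apply IsHomogeneous.sum
  intro i _
  have := pderiv_isHomog (pderiv_isHomog h i) i
  rwa [tsub_tsub] at this

lemma Lap_eq_zero_of_small {d n : ℕ} {p : MvPolynomial (Fin d) ℂ} (h : p.IsHomogeneous n)
    (hn : n ≤ 1) : Lap d p = 0 := by
  rw [Lap_apply]
  apply Finset.sum_eq_zero
  intro i _
  interval_cases n
  · rw [pderiv_eq_zero_of_homog_zero h i, map_zero]
  · exact pderiv_eq_zero_of_homog_zero (by simpa using pderiv_isHomog h i) i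

/- ### Surjectivity of the Laplacian on homogeneous polynomials -/

lemma monomial_mem_S {d : ℕ} (k : ℕ) (i0 : Fin d) :
    ∀ m : ℕ, ∀ α : Fin d →₀ ℕ, α.degree - α i0 ≤ m → α.degree = k →
      monomial α (1 : ℂ) ∈ Submodule.map (Lap d) (homogeneousSubmodule (Fin d) ℂ (k + 2)) := by
  intro m
  induction m using Nat.strong_induction_on with
  | _ m IH =>
    intro α hm hα
    set S := Submodule.map (Lap d) (homogeneousSubmodule (Fin d) ℂ (k + 2)) with hS
    set β : Fin d →₀ ℕ := α + Finsupp.single i0 2 with hβ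
    set c : ℂ := (((α i0 : ℂ) + 2) * ((α i0 : ℂ) + 1))⁻¹ with hc
    have hcne : (((α i0 : ℂ) + 2) * ((α i0 : ℂ) + 1)) ≠ 0 := by
      have : (((α i0 + 2) * (α i0 + 1) : ℕ) : ℂ) ≠ 0 :=
        Nat.cast_ne_zero.2 (by positivity)
      push_cast at this
      convert this using 2
    have hβdeg : β.degree = k + 2 := by
      rw [hβ, degree_add', degree_single', hα]
    have hβi0 : β i0 = α i0 + 2 := by simp [hβ]
    have hβi : ∀ i : Fin d, i ≠ i0 → β i = α i := by
      intro i hi; simp [hβ, Finsupp.single_apply, Ne.symm hi]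
    have key : Lap d (monomial β c) = monomial α 1 +
        ∑ i ∈ Finset.univ.erase i0,
          monomial (β - Finsupp.single i 2) (c * (β i) * ((β i - 1 : ℕ))) := by
      rw [Lap_monomial, ← Finset.add_sum_erase _ _ (Finset.mem_univ i0)]
      congr 1
      have h1 : β - Finsupp.single i0 2 = α := by
        rw [hβ, add_tsub_cancel_right]
      rw [h1, hβi0]
      congr 1
      have h2 : (α i0 + 2 - 1) = α i0 + 1 := by omega
      rw [h2, hc]
      push_cast
      field_simp
      exact div_self (left_ne_zero_of_mul hcne)
    have hmonβ : monomial β c ∈ homogeneousSubmodule (Fin d) ℂ (k + 2) :=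
      isHomogeneous_monomial _ hβdeg
    have hLβ : Lap d (monomial β c) ∈ S := ⟨_, hmonβ, rfl⟩
    have herr : ∀ i ∈ Finset.univ.erase i0,
        monomial (β - Finsupp.single i 2) (c * (β i) * ((β i - 1 : ℕ)) : ℂ) ∈ S := by
      intro i hi
      have hine : i ≠ i0 := Finset.ne_of_mem_erase hi
      rw [hβi i hine]
      rcases Nat.lt_or_ge (α i) 2 with hlt | hge
      · obtain h | h : α i = 0 ∨ α i = 1 := by omega
        · rw [h]; simp
        · rw [h]; norm_num
      · set γ := β - Finsupp.single i 2 with hγ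
        have hβige : 2 ≤ β i := by rw [hβi i hine]; exact hge
        have hγi0 : γ i0 = α i0 + 2 := by
          rw [hγ, Finsupp.tsub_apply, Finsupp.single_apply, if_neg hine, hβi0]; simp
        have hγdeg : γ.degree = k := by
          have h2 := congrArg Finsupp.degree (sub_single_add β i 2 hβige)
          rw [degree_add', degree_single', hβdeg] at h2
          rw [hγ]
          omega
        have hle : α i + α i0 ≤ α.degree := by
          rw [degree_eq_sum_univ]
          have h1 : ∑ j ∈ ({i, i0} : Finset (Fin d)), α j ≤ ∑ j : Fin d, α j :=
            Finset.sum_le_sum_of_subset (Finset.subset_univ _)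
          rwa [Finset.sum_pair hine] at h1
        have hγmem : monomial γ (1:ℂ) ∈ S := by
          refine IH (m - 2) (by omega) γ ?_ hγdeg
          rw [hγdeg, hγi0]
          omega
        have heq : monomial γ (c * (α i) * ((α i - 1 : ℕ)) : ℂ)
            = (c * (α i) * ((α i - 1 : ℕ)) : ℂ) • monomial γ (1:ℂ) := by
          rw [smul_monomial, smul_eq_mul, mul_one]
        rw [heq]
        exact S.smul_mem _ hγmem
    have : monomial α (1:ℂ) = Lap d (monomial β c) - ∑ i ∈ Finset.univ.erase i0,
          monomial (β - Finsupp.single i 2) (c * (β i) * ((β i - 1 : ℕ))) := by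
      rw [key]; ring
    rw [this]
    exact S.sub_mem hLβ (S.sum_mem herr)

lemma homog_le_map {d : ℕ} (k : ℕ) (hd : 0 < d) :
    homogeneousSubmodule (Fin d) ℂ k ≤
      Submodule.map (Lap d) (homogeneousSubmodule (Fin d) ℂ (k + 2)) := by
  intro q hq
  rw [← support_sum_monomial_coeff q]
  apply Submodule.sum_mem
  intro α hα
  have hdeg : α.degree = k := by
    rw [Finsupp.degree_eq_weight_one]; exact hq (mem_support_iff.1 hα)
  have h1 : (monomial α (coeff α q) : MvPolynomial (Fin d) ℂ)
      = (coeff α q) • monomial α 1 := by rw [smul_monomial, smul_eq_mul, mul_one]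
  rw [h1]
  exact Submodule.smul_mem _ _
    (monomial_mem_S k ⟨0, hd⟩ α.degree α (Nat.sub_le _ _) hdeg)

set_option synthInstance.maxHeartbeats 1000000

/- ### The restricted Laplacian and rank-nullity -/

lemma lap_maps_to {d k : ℕ} : ∀ p ∈ homogeneousSubmodule (Fin d) ℂ (k + 2),
    Lap d p ∈ homogeneousSubmodule (Fin d) ℂ k := by
  intro p hp
  have h := Lap_isHomog (d := d) (n := k + 2) hp
  simpa using h

noncomputable def LapRes (d k : ℕ) :
    (homogeneousSubmodule (Fin d) ℂ (k + 2)) →ₗ[ℂ] (homogeneousSubmodule (Fin d) ℂ k) :=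
  (Lap d).restrict lap_maps_to

lemma lapRes_surjective {d k : ℕ} (hd : 0 < d) : Function.Surjective (LapRes d k) := by
  rintro ⟨q, hq⟩
  obtain ⟨p, hp, hLp⟩ := homog_le_map k hd hq
  exact ⟨⟨p, hp⟩, Subtype.ext hLp⟩

noncomputable def kerEquiv (d k : ℕ) :
    ↥((homogeneousSubmodule (Fin d) ℂ (k + 2)) ⊓ LinearMap.ker (Lap d)) ≃ₗ[ℂ]
      ↥(LinearMap.ker (LapRes d k)) where
  toFun x := ⟨⟨x.1, x.2.1⟩,
    show LapRes d k ⟨x.1, x.2.1⟩ = 0 from Subtype.ext (show Lap d x.1 = 0 from x.2.2)⟩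
  invFun y := ⟨y.1.1, ⟨y.1.2,
    show Lap d y.1.1 = 0 from congrArg Subtype.val
      (show LapRes d k y.1 = 0 from y.2)⟩⟩
  map_add' _ _ := rfl
  map_smul' _ _ := rfl
  left_inv _ := rfl
  right_inv _ := rfl

lemma finrank_harmonic {d k : ℕ} (hd : 0 < d) :
    Module.finrank ℂ
        ↥((homogeneousSubmodule (Fin d) ℂ (k + 2)) ⊓ LinearMap.ker (Lap d))
      + (d + k - 1).choose k = (d + (k + 2) - 1).choose (k + 2) := by
  have h1 := LinearMap.finrank_range_add_finrank_ker (LapRes d k)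
  have h2 : LinearMap.range (LapRes d k) = ⊤ :=
    LinearMap.range_eq_top.2 (lapRes_surjective hd)
  have h3 : Module.finrank ℂ (⊤ : Submodule ℂ ↥(homogeneousSubmodule (Fin d) ℂ k))
      = Module.finrank ℂ (homogeneousSubmodule (Fin d) ℂ k) := Submodule.topEquiv.finrank_eq
  rw [h2, h3, finrank_homog d k, finrank_homog d (k + 2)] at h1
  have h4 : Module.finrank ℂ
        ↥((homogeneousSubmodule (Fin d) ℂ (k + 2)) ⊓ LinearMap.ker (Lap d))
      = Module.finrank ℂ ↥(LinearMap.ker (LapRes d k)) :=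
    LinearEquiv.finrank_eq (kerEquiv d k)
  rw [h4]
  omega

instance harmonicFinite (d k : ℕ) :
    FiniteDimensional ℂ
      ↥((homogeneousSubmodule (Fin d) ℂ (k + 2)) ⊓ LinearMap.ker (Lap d)) :=
  Module.Finite.equiv (kerEquiv d k).symm

/- ### Arithmetic -/

lemma arith_main (D K X : ℕ)
    (hX : X + (D + K + 1).choose K = (D + K + 3).choose (K + 2)) :
    X * (Nat.factorial D * Nat.factorial (K + 2)) =
      (D + 2 * K + 4) * Nat.factorial (D + K + 1) := by
  have hC1 : (D + K + 3).choose (K + 2) * Nat.factorial (K + 2) * Nat.factorial (D + 1)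
      = Nat.factorial (D + K + 3) := by
    have h := Nat.choose_mul_factorial_mul_factorial (show K + 2 ≤ D + K + 3 by omega)
    rwa [show D + K + 3 - (K + 2) = D + 1 by omega] at h
  have hC2 : (D + K + 1).choose K * Nat.factorial K * Nat.factorial (D + 1)
      = Nat.factorial (D + K + 1) := by
    have h := Nat.choose_mul_factorial_mul_factorial (show K ≤ D + K + 1 by omega)
    rwa [show D + K + 1 - K = D + 1 by omega] at h
  have hf1 : Nat.factorial (D + 1) = (D + 1) * Nat.factorial D := Nat.factorial_succ D
  have hf2 : Nat.factorial (K + 2) = (K + 2) * ((K + 1) * Nat.factorial K) := by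
    rw [Nat.factorial_succ, Nat.factorial_succ]
  have hf3 : Nat.factorial (D + K + 3) =
      (D + K + 3) * ((D + K + 2) * Nat.factorial (D + K + 1)) := by
    rw [show D + K + 3 = (D + K + 2) + 1 by omega, Nat.factorial_succ,
      show D + K + 2 = (D + K + 1) + 1 by omega, Nat.factorial_succ]
  have e1 : X * Nat.factorial (K + 2) * Nat.factorial (D + 1)
        + (K + 1) * (K + 2) * Nat.factorial (D + K + 1)
      = (D + K + 3) * (D + K + 2) * Nat.factorial (D + K + 1) := by
    have h := congrArg (· * Nat.factorial (K + 2) * Nat.factorial (D + 1)) hX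
    simp only [add_mul] at h
    have h2 : (D + K + 1).choose K * Nat.factorial (K + 2) * Nat.factorial (D + 1)
        = (K + 1) * (K + 2) * Nat.factorial (D + K + 1) := by
      rw [hf2, ← hC2]; ring
    rw [h2, hC1, hf3] at h
    rw [h]; ring
  have e2 : (D + K + 3) * (D + K + 2) * Nat.factorial (D + K + 1)
      = (D + 1) * ((D + 2 * K + 4) * Nat.factorial (D + K + 1))
        + (K + 1) * (K + 2) * Nat.factorial (D + K + 1) := by ring
  have e3 : X * Nat.factorial (K + 2) * Nat.factorial (D + 1)
      = (D + 1) * ((D + 2 * K + 4) * Nat.factorial (D + K + 1)) := by omega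
  apply Nat.eq_of_mul_eq_mul_right (show 0 < D + 1 by omega)
  calc X * (Nat.factorial D * Nat.factorial (K + 2)) * (D + 1)
      = X * Nat.factorial (K + 2) * ((D + 1) * Nat.factorial D) := by ring
    _ = X * Nat.factorial (K + 2) * Nat.factorial (D + 1) := by rw [hf1]
    _ = (D + 1) * ((D + 2 * K + 4) * Nat.factorial (D + K + 1)) := e3
    _ = (D + 2 * K + 4) * Nat.factorial (D + K + 1) * (D + 1) := by ring

/- ### Main theorem -/

/-- The space of degree-`k` harmonic polynomials in `d ≥ 3` variables is finite-dimensional,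
of dimension `(d+2k-2)(d+k-3)!/((d-2)!·k!)`. -/
theorem dim_harmonic_polynomials (d k : ℕ) (hd : 3 ≤ d) :
    letI Hk : Submodule ℂ (MvPolynomial (Fin d) ℂ) :=
      (homogeneousSubmodule (Fin d) ℂ k) ⊓
        LinearMap.ker (∑ i : Fin d,
          ((pderiv (R := ℂ) i).toLinearMap ∘ₗ (pderiv (R := ℂ) i).toLinearMap))
    FiniteDimensional ℂ Hk ∧
      Module.finrank ℂ Hk * (Nat.factorial (d - 2) * Nat.factorial k) =
        (d + 2 * k - 2) * Nat.factorial (d + k - 3) := by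
  show FiniteDimensional ℂ
      ↥((homogeneousSubmodule (Fin d) ℂ k) ⊓ LinearMap.ker (Lap d)) ∧
    Module.finrank ℂ
        ↥((homogeneousSubmodule (Fin d) ℂ k) ⊓ LinearMap.ker (Lap d)) *
        (Nat.factorial (d - 2) * Nat.factorial k) =
      (d + 2 * k - 2) * Nat.factorial (d + k - 3)
  obtain ⟨D, rfl⟩ : ∃ D, d = D + 3 := ⟨d - 3, by omega⟩
  match k with
  | 0 =>
    have hEq : (homogeneousSubmodule (Fin (D + 3)) ℂ 0) ⊓ LinearMap.ker (Lap (D + 3))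
        = homogeneousSubmodule (Fin (D + 3)) ℂ 0 := by
      refine inf_eq_left.2 fun p hp => ?_
      show Lap (D + 3) p = 0
      exact Lap_eq_zero_of_small hp (by norm_num)
    rw [hEq]
    refine ⟨homogFinite _ _, ?_⟩
    rw [finrank_homog]
    simp only [Nat.choose_zero_right, Nat.factorial_zero, one_mul, mul_one]
    rw [show D + 3 - 2 = D + 1 by omega, show D + 3 + 0 - 3 = D by omega]
    exact Nat.factorial_succ D
  | 1 =>
    have hEq : (homogeneousSubmodule (Fin (D + 3)) ℂ 1) ⊓ LinearMap.ker (Lap (D + 3))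
        = homogeneousSubmodule (Fin (D + 3)) ℂ 1 := by
      refine inf_eq_left.2 fun p hp => ?_
      show Lap (D + 3) p = 0
      exact Lap_eq_zero_of_small hp (by norm_num)
    rw [hEq]
    refine ⟨homogFinite _ _, ?_⟩
    rw [finrank_homog]
    rw [show D + 3 + 1 - 1 = D + 3 by omega, Nat.choose_one_right,
      show D + 3 - 2 = D + 1 by omega, show D + 3 + 1 - 3 = D + 1 by omega,
      show D + 3 + 2 * 1 - 2 = D + 3 by omega, Nat.factorial_one, mul_one]
  | (K + 2) =>
    refine ⟨harmonicFinite _ _, ?_⟩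
    have h := finrank_harmonic (d := D + 3) (k := K) (by omega)
    rw [show D + 3 + K - 1 = (D + 1) + K + 1 by omega,
      show D + 3 + (K + 2) - 1 = (D + 1) + K + 3 by omega] at h
    have h2 := arith_main (D + 1) K _ h
    rw [show D + 3 - 2 = D + 1 by omega,
      show D + 3 + 2 * (K + 2) - 2 = (D + 1) + 2 * K + 4 by omega,
      show D + 3 + (K + 2) - 3 = (D + 1) + K + 1 by omega]
    exact h2
end
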